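/- arXiv:0802.3010 — 4 statements merged into one kernel-verified Lean document; each statement's English description precedes it below -/
import Mathlib

section
/- For every integer k ≥ 1, the set L(k) has cardinality (k-1)!. -/
/-- Formal expressions: complete binary bracketings with leaves labeled by natural numbers. -/
inductive BTree : Type
  | leaf : ℕ → BTree
  | node : BTree → BTree → BTree
  deriving DecidableEq

namespace BTree

/-- The list of leaf labels, read from left to right. -/
def leaves : BTree → List ℕ
  | leaf i => [i]
  | node l r => leaves l ++ leaves r

/-- In every bracket `[u,v]`, the minimum index occurs inside `u`
and the maximum index occurs inside `v`. -/
def valid : BTree → Prop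
  | leaf _ => True
  | node l r => valid l ∧ valid r ∧
      (∃ a ∈ leaves l, ∀ i ∈ leaves l ++ leaves r, a ≤ i) ∧
      (∃ b ∈ leaves r, ∀ i ∈ leaves l ++ leaves r, i ≤ b)

/-- Membership in `L n`: the leaf labels are exactly `1, …, n`, each occurring
exactly once (in any order), and the min/max condition holds at every bracket. -/
def memL (n : ℕ) (t : BTree) : Prop :=
  (leaves t).Perm (List.range' 1 n) ∧ valid t

end BTree

namespace BTree

theorem leaves_ne_nil : ∀ t : BTree, t.leaves ≠ []
  | leaf i => by simp [leaves]
  | node l r => by simp [leaves, leaves_ne_nil l]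

theorem leaves_length_pos (t : BTree) : 0 < t.leaves.length :=
  List.length_pos_iff.mpr t.leaves_ne_nil

theorem finite_aux (N : ℕ) (s : Finset ℕ) :
    {t : BTree | t.leaves.length ≤ N ∧ ∀ x ∈ t.leaves, x ∈ s}.Finite := by
  induction N with
  | zero =>
    refine Set.Finite.subset Set.finite_empty ?_
    rintro t ⟨h1, -⟩
    have := t.leaves_length_pos
    omega
  | succ N ih =>
    refine Set.Finite.subset (Set.Finite.union ((s.finite_toSet).image BTree.leaf)
      ((ih.prod ih).image (fun p => BTree.node p.1 p.2))) ?_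
    rintro t ⟨hlen, hmem⟩
    cases t with
    | leaf x => exact Or.inl ⟨x, hmem x (by simp [leaves]), rfl⟩
    | node l r =>
      have h1 := l.leaves_length_pos
      have h2 := r.leaves_length_pos
      simp only [leaves, List.length_append, List.mem_append] at hlen hmem
      exact Or.inr ⟨(l, r), ⟨⟨show l.leaves.length ≤ N by omega,
        fun x hx => hmem x (Or.inl hx)⟩,
        ⟨show r.leaves.length ≤ N by omega, fun x hx => hmem x (Or.inr hx)⟩⟩, rfl⟩

/-- The set of valid trees whose leaves are a permutation of `L`. -/
def TT (L : List ℕ) : Type := {t : BTree // t.leaves.Perm L ∧ t.valid}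

instance finite_TT (L : List ℕ) : Finite (TT L) := by
  have h : {t : BTree | t.leaves.Perm L ∧ t.valid} ⊆
      {t : BTree | t.leaves.length ≤ L.length ∧ ∀ x ∈ t.leaves, x ∈ L.toFinset} := by
    rintro t ⟨hp, -⟩
    exact ⟨hp.length_eq.le, fun x hx => List.mem_toFinset.mpr (hp.mem_iff.mp hx)⟩
  exact ((finite_aux L.length L.toFinset).subset h).to_subtype

abbrev Idx (L : List ℕ) (a b : ℕ) : Type :=
  {B : Finset ℕ // B ∈ ((L.toFinset.erase a).erase b).powerset}

abbrev Fib (L : List ℕ) (a : ℕ) (B : Finset ℕ) : Type :=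
  TT ((insert a B).sort (· ≤ ·)) × TT ((L.toFinset \ insert a B).sort (· ≤ ·))

theorem leaf_no (L : List ℕ) (a b : ℕ) (haL : a ∈ L) (hbL : b ∈ L) (hab : a ≠ b)
    (x : ℕ) (hx : (BTree.leaf x).leaves.Perm L) : False := by
  have ha : a ∈ (BTree.leaf x).leaves := hx.mem_iff.mpr haL
  have hb : b ∈ (BTree.leaf x).leaves := hx.mem_iff.mpr hbL
  simp only [BTree.leaves, List.mem_singleton] at ha hb
  exact hab (ha.trans hb.symm)

def fwd (L : List ℕ) (hnd : L.Nodup) (a b : ℕ) (haL : a ∈ L) (hbL : b ∈ L)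
    (hmin : ∀ x ∈ L, a ≤ x) (hmax : ∀ x ∈ L, x ≤ b) (hab : a ≠ b) :
    TT L → Σ B : Idx L a b, Fib L a B.1
  | ⟨.leaf x, hx⟩ => (leaf_no L a b haL hbL hab x hx.1).elim
  | ⟨.node l r, h⟩ =>
    have hperm : (l.leaves ++ r.leaves).Perm L := h.1
    have hndlr : (l.leaves ++ r.leaves).Nodup := hperm.nodup_iff.mpr hnd
    have hnl : l.leaves.Nodup := (List.nodup_append.mp hndlr).1
    have hnr : r.leaves.Nodup := (List.nodup_append.mp hndlr).2.1
    have hdisj : l.leaves.Disjoint r.leaves := (List.nodup_append'.mp hndlr).2.2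
    have hval : l.valid ∧ r.valid ∧
        (∃ a' ∈ l.leaves, ∀ i ∈ l.leaves ++ r.leaves, a' ≤ i) ∧
        (∃ b' ∈ r.leaves, ∀ i ∈ l.leaves ++ r.leaves, i ≤ b') := h.2
    have hal : a ∈ l.leaves := by
      obtain ⟨-, -, ⟨a', ha', hle⟩, -⟩ := hval
      have h1 : a' ≤ a := hle a (hperm.mem_iff.mpr haL)
      have h2 : a ≤ a' := hmin a' (hperm.mem_iff.mp (List.mem_append.mpr (Or.inl ha')))
      exact (le_antisymm h1 h2) ▸ ha'
    have hbr : b ∈ r.leaves := by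
      obtain ⟨-, -, -, ⟨b', hb', hle⟩⟩ := hval
      have h1 : b ≤ b' := hle b (hperm.mem_iff.mpr hbL)
      have h2 : b' ≤ b := hmax b' (hperm.mem_iff.mp (List.mem_append.mpr (Or.inr hb')))
      exact (le_antisymm h2 h1) ▸ hb'
    have hunion : l.leaves.toFinset ∪ r.leaves.toFinset = L.toFinset := by
      rw [← List.toFinset_append]; exact List.toFinset_eq_of_perm _ _ hperm
    have hdisjF : Disjoint l.leaves.toFinset r.leaves.toFinset :=
      List.disjoint_toFinset_iff_disjoint.mpr hdisj
    have hins : insert a (l.leaves.toFinset.erase a) = l.leaves.toFinset :=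
      Finset.insert_erase (List.mem_toFinset.mpr hal)
    have hsd : L.toFinset \ l.leaves.toFinset = r.leaves.toFinset := by
      rw [← hunion]; exact Finset.union_sdiff_cancel_left hdisjF
    ⟨⟨l.leaves.toFinset.erase a, by
        rw [Finset.mem_powerset]
        intro x hx
        rw [Finset.mem_erase] at hx
        rw [Finset.mem_erase, Finset.mem_erase]
        refine ⟨?_, hx.1, by rw [← hunion]; exact Finset.mem_union_left _ hx.2⟩
        intro hxb
        exact hdisj (by simpa [hxb] using List.mem_toFinset.mp hx.2) hbr⟩,
      ⟨l, by
        rw [hins]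
        exact List.perm_of_nodup_nodup_toFinset_eq hnl (Finset.sort_nodup _ _)
          (by rw [Finset.sort_toFinset]), hval.1⟩,
      ⟨r, by
        rw [hins, hsd]
        exact List.perm_of_nodup_nodup_toFinset_eq hnr (Finset.sort_nodup _ _)
          (by rw [Finset.sort_toFinset]), hval.2.1⟩⟩

def bwd (L : List ℕ) (hnd : L.Nodup) (a b : ℕ) (haL : a ∈ L) (hbL : b ∈ L)
    (hmin : ∀ x ∈ L, a ≤ x) (hmax : ∀ x ∈ L, x ≤ b) (hab : a ≠ b) :
    (Σ B : Idx L a b, Fib L a B.1) → TT L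
  | ⟨⟨B, hB⟩, ⟨l, hl⟩, ⟨r, hr⟩⟩ =>
    have hBs : B ⊆ (L.toFinset.erase a).erase b := Finset.mem_powerset.mp hB
    have hanB : a ∉ B := fun hc => by
      have := hBs hc; rw [Finset.mem_erase, Finset.mem_erase] at this; exact this.2.1 rfl
    have hbnB : b ∉ B := fun hc => by
      have := hBs hc; rw [Finset.mem_erase] at this; exact this.1 rfl
    have hA : insert a B ⊆ L.toFinset := by
      intro x hx
      rcases Finset.mem_insert.mp hx with h1 | h1
      · exact h1 ▸ List.mem_toFinset.mpr haL
      · have := hBs h1; rw [Finset.mem_erase, Finset.mem_erase] at this; exact this.2.2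
    have hFl : l.leaves.toFinset = insert a B := by
      rw [List.toFinset_eq_of_perm _ _ hl.1, Finset.sort_toFinset]
    have hFr : r.leaves.toFinset = L.toFinset \ insert a B := by
      rw [List.toFinset_eq_of_perm _ _ hr.1, Finset.sort_toFinset]
    have hnl : l.leaves.Nodup := hl.1.nodup_iff.mpr (Finset.sort_nodup _ _)
    have hnr : r.leaves.Nodup := hr.1.nodup_iff.mpr (Finset.sort_nodup _ _)
    have hdisj : l.leaves.Disjoint r.leaves := by
      refine List.disjoint_toFinset_iff_disjoint.mp ?_
      rw [hFl, hFr]; exact Finset.disjoint_sdiff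
    have hndlr : (l.leaves ++ r.leaves).Nodup := List.nodup_append'.mpr ⟨hnl, hnr, hdisj⟩
    have hperm : (l.leaves ++ r.leaves).Perm L := by
      refine List.perm_of_nodup_nodup_toFinset_eq hndlr hnd ?_
      rw [List.toFinset_append, hFl, hFr, Finset.union_sdiff_of_subset hA]
    ⟨.node l r, hperm, hl.2, hr.2,
      ⟨a, List.mem_toFinset.mp (hFl ▸ Finset.mem_insert_self a B),
        fun i hi => hmin i (hperm.mem_iff.mp hi)⟩,
      ⟨b, by
        refine List.mem_toFinset.mp (hFr ▸ Finset.mem_sdiff.mpr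
          ⟨List.mem_toFinset.mpr hbL, ?_⟩)
        rw [Finset.mem_insert]
        rintro (h1 | h1)
        · exact hab h1.symm
        · exact hbnB h1,
        fun i hi => hmax i (hperm.mem_iff.mp hi)⟩⟩

def splitEquiv (L : List ℕ) (hnd : L.Nodup) (a b : ℕ) (haL : a ∈ L) (hbL : b ∈ L)
    (hmin : ∀ x ∈ L, a ≤ x) (hmax : ∀ x ∈ L, x ≤ b) (hab : a ≠ b) :
    TT L ≃ Σ B : Idx L a b, Fib L a B.1 where
  toFun := fwd L hnd a b haL hbL hmin hmax hab
  invFun := bwd L hnd a b haL hbL hmin hmax hab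
  left_inv := by
    rintro ⟨t, h⟩
    cases t with
    | leaf x => exact (leaf_no L a b haL hbL hab x h.1).elim
    | node l r => rfl
  right_inv := by
    rintro ⟨⟨B, hB⟩, ⟨l, hl⟩, ⟨r, hr⟩⟩
    have hBs : B ⊆ (L.toFinset.erase a).erase b := Finset.mem_powerset.mp hB
    have hanB : a ∉ B := fun hc => by
      have := hBs hc; rw [Finset.mem_erase, Finset.mem_erase] at this; exact this.2.1 rfl
    have hFl : l.leaves.toFinset = insert a B := by
      rw [List.toFinset_eq_of_perm _ _ hl.1, Finset.sort_toFinset]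
    have hkey : l.leaves.toFinset.erase a = B := by
      rw [hFl, Finset.erase_insert hanB]
    subst hkey
    rfl

theorem nat_card_sigma {ι : Type} [Fintype ι] (f : ι → Type) [∀ i, Finite (f i)] :
    Nat.card (Σ i, f i) = ∑ i, Nat.card (f i) := by
  classical
  letI : ∀ i, Fintype (f i) := fun i => Fintype.ofFinite _
  simp only [Nat.card_eq_fintype_card, Fintype.card_sigma]

theorem card_TT : ∀ (n : ℕ) (L : List ℕ), L.Nodup → L.length = n → 1 ≤ n →
    Nat.card (TT L) = (n - 1).factorial := by
  intro n
  induction n using Nat.strong_induction_on with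
  | _ n ih =>
  intro L hnd hlen hn
  rcases n with _ | _ | m
  · omega
  · -- n = 1
    obtain ⟨x, rfl⟩ := List.length_eq_one_iff.mp hlen
    have huniq : ∀ t : TT [x], t = ⟨BTree.leaf x, List.Perm.refl _, trivial⟩ := by
      rintro ⟨t, ht⟩
      cases t with
      | leaf y =>
        have h0 : y = x := by
          have h1 : [y] = [x] := List.perm_singleton.mp ht.1
          simpa using h1
        subst h0
        rfl
      | node l r =>
        have h1 := ht.1.length_eq
        have h2 := l.leaves_length_pos
        have h3 := r.leaves_length_pos
        simp only [BTree.leaves, List.length_append, List.length_singleton] at h1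
        omega
    show Nat.card (TT [x]) = 1
    rw [Nat.card_eq_one_iff_unique]
    exact ⟨⟨fun s t => (huniq s).trans (huniq t).symm⟩,
      ⟨⟨BTree.leaf x, List.Perm.refl _, trivial⟩⟩⟩
  · -- n = m + 2
    have hcard : L.toFinset.card = m + 2 := by
      rw [List.toFinset_card_of_nodup hnd, hlen]
    have hne : L.toFinset.Nonempty := by
      rw [← Finset.card_pos, hcard]; omega
    set a := L.toFinset.min' hne with ha_def
    set b := L.toFinset.max' hne with hb_def
    have haL : a ∈ L := List.mem_toFinset.mp (L.toFinset.min'_mem hne)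
    have hbL : b ∈ L := List.mem_toFinset.mp (L.toFinset.max'_mem hne)
    have hmin : ∀ x ∈ L, a ≤ x := fun x hx =>
      Finset.min'_le _ x (List.mem_toFinset.mpr hx)
    have hmax : ∀ x ∈ L, x ≤ b := fun x hx =>
      Finset.le_max' _ x (List.mem_toFinset.mpr hx)
    have hab : a ≠ b :=
      ne_of_lt (Finset.min'_lt_max'_of_card _ (by rw [hcard]; omega))
    have haS : a ∈ L.toFinset := List.mem_toFinset.mpr haL
    have hbS : b ∈ (L.toFinset.erase a) :=
      Finset.mem_erase.mpr ⟨hab.symm, List.mem_toFinset.mpr hbL⟩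
    have hI : ((L.toFinset.erase a).erase b).card = m := by
      rw [Finset.card_erase_of_mem hbS, Finset.card_erase_of_mem haS, hcard]
      omega
    rw [Nat.card_congr (splitEquiv L hnd a b haL hbL hmin hmax hab)]
    rw [nat_card_sigma]
    have hfib : ∀ B : Idx L a b,
        Nat.card (Fib L a B.1) = B.1.card.factorial * (m - B.1.card).factorial := by
      rintro ⟨B, hB⟩
      have hBs : B ⊆ (L.toFinset.erase a).erase b := Finset.mem_powerset.mp hB
      have hBcard : B.card ≤ m := by rw [← hI]; exact Finset.card_le_card hBs
      have hanB : a ∉ B := fun hc => by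
        have := hBs hc; rw [Finset.mem_erase, Finset.mem_erase] at this
        exact this.2.1 rfl
      have hA : insert a B ⊆ L.toFinset := by
        intro x hx
        rcases Finset.mem_insert.mp hx with h1 | h1
        · exact h1 ▸ haS
        · have := hBs h1; rw [Finset.mem_erase, Finset.mem_erase] at this
          exact this.2.2
      have hAcard : (insert a B).card = B.card + 1 := Finset.card_insert_of_notMem hanB
      have h1 : Nat.card (TT ((insert a B).sort (· ≤ ·))) = B.card.factorial := by
        rw [ih (B.card + 1) (by omega) _ (Finset.sort_nodup _ _)
          (by rw [Finset.length_sort, hAcard]) (by omega)]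
        simp
      have hCcard : (L.toFinset \ insert a B).card = m + 1 - B.card := by
        rw [Finset.card_sdiff_of_subset hA, hcard, hAcard]
        omega
      have h2 : Nat.card (TT ((L.toFinset \ insert a B).sort (· ≤ ·))) =
          (m - B.card).factorial := by
        rw [ih (m + 1 - B.card) (by omega) _ (Finset.sort_nodup _ _)
          (by rw [Finset.length_sort, hCcard]) (by omega)]
        congr 1
        omega
      rw [Nat.card_prod, h1, h2]
    rw [Finset.sum_congr rfl (fun B _ => hfib B)]
    rw [Finset.sum_coe_sort ((L.toFinset.erase a).erase b).powerset
      (fun B => B.card.factorial * (m - B.card).factorial)]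
    rw [Finset.sum_powerset_apply_card (fun j => j.factorial * (m - j).factorial), hI]
    rw [Finset.sum_congr rfl (fun j hj => ?_), Finset.sum_const, Finset.card_range]
    · rw [smul_eq_mul]
      show (m + 1) * m.factorial = (m + 1).factorial
      rw [Nat.factorial_succ]
    · rw [smul_eq_mul, ← mul_assoc,
        Nat.choose_mul_factorial_mul_factorial (Nat.lt_succ_iff.mp (Finset.mem_range.mp hj))]

end BTree

/-- For every integer `k ≥ 1`, the set `L(k)` has cardinality `(k-1)!`. -/
theorem L_card (k : ℕ) (hk : 1 ≤ k) :
    Nat.card {t : BTree // BTree.memL k t} = (k - 1).factorial := by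
  have := BTree.card_TT k (List.range' 1 k) (List.nodup_range')
    (by simp) hk
  exact this
end

section
/- Let F(X) = Σ_{n≥1} (n-1)!·X^n ∈ ℚ[[X]] and let B = −F^{<−1>}, where F^{<−1>} is the unique formal power series G with zero constant term satisfying F(G(X)) = X. Then B satisfies the differential equation X·B'(X) + (B'(X) + B(X))·B(X) = 0 in ℚ[[X]]. -/
open PowerSeries Finset

lemma coeff_zero_of_dvd {k p : ℕ} (hpk : p < k) {A : PowerSeries ℚ}
    (hd : (PowerSeries.X : PowerSeries ℚ) ^ k ∣ A) : PowerSeries.coeff p A = 0 := by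
  obtain ⟨B, rfl⟩ := hd
  rw [PowerSeries.coeff_X_pow_mul', if_neg (not_le.mpr hpk)]

lemma coeff_mul_congr {A B C : PowerSeries ℚ} {n : ℕ}
    (h : ∀ p ≤ n, PowerSeries.coeff p A = PowerSeries.coeff p B) :
    PowerSeries.coeff n (A * C) = PowerSeries.coeff n (B * C) := by
  rw [PowerSeries.coeff_mul, PowerSeries.coeff_mul]
  refine Finset.sum_congr rfl fun p hp => ?_
  rw [h p.1 (Nat.le.intro (Finset.HasAntidiagonal.mem_antidiagonal.mp hp))]

lemma key (G : PowerSeries ℚ) (h0 : PowerSeries.constantCoeff G = 0)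
    (hS : ∀ n : ℕ,
      ∑ m ∈ Finset.Icc 1 n, ((m - 1).factorial : ℚ) * PowerSeries.coeff n (G ^ m) =
        PowerSeries.coeff n (PowerSeries.X : PowerSeries ℚ)) :
    PowerSeries.X * (d⁄dX ℚ G) = G * (d⁄dX ℚ G) + G ^ 2 := by
  have hX : (PowerSeries.X : PowerSeries ℚ) ∣ G := PowerSeries.X_dvd_iff.mpr h0
  set dG := d⁄dX ℚ G with hdG
  -- vanishing of coefficients below the order
  have hvan : ∀ j p : ℕ, p < j → PowerSeries.coeff p (G ^ j * dG) = 0 := fun j p hpj =>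
    coeff_zero_of_dvd hpj (dvd_mul_of_dvd_left (pow_dvd_pow_of_dvd hX j) dG)
  have hvan' : ∀ j p : ℕ, p < j → PowerSeries.coeff p (G ^ j) = 0 := fun j p hpj =>
    coeff_zero_of_dvd hpj (pow_dvd_pow_of_dvd hX j)
  -- the differentiated relation
  have hstar : ∀ n : ℕ,
      ∑ j ∈ Finset.range (n + 1),
        ((j + 1).factorial : ℚ) * PowerSeries.coeff n (G ^ j * dG) =
        (if n = 0 then 1 else 0) := by
    intro n
    have h := hS (n + 1)
    rw [← Finset.Ico_add_one_right_eq_Icc, Finset.sum_Ico_eq_sum_range] at h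
    simp only [Nat.add_sub_cancel_left, Nat.add_sub_cancel, Nat.succ_sub_one] at h
    have h2 := congrArg (· * (((n : ℚ)) + 1)) h
    simp only [Finset.sum_mul] at h2
    rw [PowerSeries.coeff_X] at h2
    have hcd : ∀ j : ℕ,
        (j.factorial : ℚ) * PowerSeries.coeff (n + 1) (G ^ (1 + j)) * ((n : ℚ) + 1) =
        ((j + 1).factorial : ℚ) * PowerSeries.coeff n (G ^ j * dG) := by
      intro j
      have hpow : (d⁄dX ℚ) (G ^ (1 + j)) = (((1 + j : ℕ)) : ℚ) • (G ^ j * dG) := by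
        rw [Derivation.leibniz_pow, show 1 + j - 1 = j from by omega, smul_eq_mul,
          Nat.cast_smul_eq_nsmul]
      have e1 : PowerSeries.coeff (n + 1) (G ^ (1 + j)) * ((n : ℚ) + 1) =
          (((1 + j : ℕ)) : ℚ) * PowerSeries.coeff n (G ^ j * dG) := by
        rw [← PowerSeries.coeff_derivative, hpow, map_smul, smul_eq_mul]
      rw [Nat.factorial_succ]
      push_cast at e1 ⊢
      linear_combination (j.factorial : ℚ) * e1
    simp only [hcd] at h2
    rcases Nat.eq_zero_or_pos n with hn | hn
    · subst hn; simp at h2; simpa using h2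
    · have : ¬ (n + 1 = 1) := by omega
      have : ¬ (n = 0) := by omega
      simpa [*] using h2
  ext n
  -- left side
  have hSfull : ∀ N : ℕ, ∀ p ≤ N,
      PowerSeries.coeff p
        (∑ m ∈ Finset.Icc 1 N, ((m - 1).factorial : ℚ) • G ^ m) =
      PowerSeries.coeff p (PowerSeries.X : PowerSeries ℚ) := by
    intro N p hpN
    rw [map_sum]
    simp only [map_smul, smul_eq_mul]
    rw [← hS p]
    symm
    apply Finset.sum_subset (Finset.Icc_subset_Icc_right hpN)
    intro m hm hm'
    simp only [Finset.mem_Icc] at hm hm'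
    have : p < m := by omega
    rw [hvan' m p this, mul_zero]
  have hL : PowerSeries.coeff n (PowerSeries.X * dG) =
      PowerSeries.coeff n (G * dG) +
        ∑ j ∈ Finset.range n, ((j + 1).factorial : ℚ) *
          PowerSeries.coeff n (G ^ (j + 2) * dG) := by
    rw [coeff_mul_congr (fun p hp => (hSfull (n + 1) p (hp.trans n.le_succ)).symm)]
    rw [Finset.sum_mul, map_sum]
    simp only [smul_mul_assoc, map_smul, smul_eq_mul]
    rw [← Finset.Ico_add_one_right_eq_Icc, Finset.sum_Ico_eq_sum_range]
    simp only [Nat.add_sub_cancel_left, Nat.add_sub_cancel, Nat.succ_sub_one]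
    rw [Finset.sum_range_succ']
    rw [add_comm]
    congr 1
    · norm_num
    · refine Finset.sum_congr rfl fun j hj => ?_
      rw [show 1 + (j + 1) = j + 2 from by omega]
  -- right side
  have hUfull : ∀ p ≤ n,
      PowerSeries.coeff p
        (∑ j ∈ Finset.range (n + 1), ((j + 1).factorial : ℚ) • (G ^ j * dG)) =
      PowerSeries.coeff p (1 : PowerSeries ℚ) := by
    intro p hpn
    rw [map_sum]
    simp only [map_smul, smul_eq_mul]
    rw [PowerSeries.coeff_one, ← hstar p]
    symm
    apply Finset.sum_subset (Finset.range_subset_range.mpr (by omega))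
    intro j hj hj'
    simp only [Finset.mem_range] at hj hj'
    have : p < j := by omega
    rw [hvan j p this, mul_zero]
  have hR : PowerSeries.coeff n (G ^ 2) =
      ∑ j ∈ Finset.range n, ((j + 1).factorial : ℚ) *
        PowerSeries.coeff n (G ^ (j + 2) * dG) := by
    have h1 : PowerSeries.coeff n (G ^ 2) =
        PowerSeries.coeff n
          ((∑ j ∈ Finset.range (n + 1), ((j + 1).factorial : ℚ) • (G ^ j * dG)) * G ^ 2) := by
      conv_lhs => rw [← one_mul (G ^ 2)]
      exact coeff_mul_congr fun p hp => (hUfull p hp).symm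
    rw [h1, Finset.sum_mul, map_sum]
    simp only [smul_mul_assoc, map_smul, smul_eq_mul]
    have hterm : ∀ j : ℕ, G ^ j * dG * G ^ 2 = G ^ (j + 2) * dG := by
      intro j; ring
    simp only [hterm]
    rw [Finset.sum_range_succ, hvan (n + 2) n (by omega), mul_zero, add_zero]
  rw [map_add, hL, hR]



/-- The generating series `F(X) = Σ_{n≥1} (n-1)!·X^n ∈ ℚ[[X]]`. -/
noncomputable def F : PowerSeries ℚ :=
  PowerSeries.mk fun n => if n = 0 then 0 else ((n - 1).factorial : ℚ)

/-- `G` is the compositional inverse `F^{<-1>}` of `F`: it has zero constant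
term and `F(G(X)) = X`.  Since `G` has zero constant coefficient, the
coefficient of `X^n` in `F(G(X)) = Σ_{m≥1} (m-1)!·G^m` is the finite sum
`Σ_{m=1}^{n} (m-1)!·[X^n]G^m`, so the equation `F(G(X)) = X` is expressed
coefficientwise by the finite sums below. -/
def IsCompInvOfF (G : PowerSeries ℚ) : Prop :=
  PowerSeries.constantCoeff G = 0 ∧
    ∀ n : ℕ,
      ∑ m ∈ Finset.Icc 1 n, ((m - 1).factorial : ℚ) * PowerSeries.coeff n (G ^ m) =
        PowerSeries.coeff n (PowerSeries.X : PowerSeries ℚ)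

open PowerSeries in
/-- `B = -F^{<-1>}` satisfies the differential equation
`X·B'(X) + (B'(X) + B(X))·B(X) = 0` in `ℚ[[X]]`. -/
theorem B_differential_equation (G : PowerSeries ℚ) (hG : IsCompInvOfF G) :
    PowerSeries.X * (d⁄dX ℚ (-G)) + ((d⁄dX ℚ (-G)) + (-G)) * (-G) = 0 := by
  obtain ⟨h0, hS⟩ := hG
  have hkey := key G h0 hS
  rw [map_neg]
  linear_combination -hkey
end

section
/- Let F(X) = Σ_{n≥1} (n-1)!·X^n ∈ ℚ[[X]], let F^{<−1>} be its compositional inverse, and for n ≥ 2 set b_n = −[X^n] F^{<−1>}(X). Then b_2 = 1 and for all n ≥ 3 one has b_n = Σ_{k=2}^{n-2} ((k+1)·b_{k+1} + b_k)·b_{n-k}. -/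
open PowerSeries Finset

/-- The series `F'(G) = Σ_{m≥0} (m+1)!·G^m`, defined coefficientwise. -/
noncomputable def Kser (G : PowerSeries ℚ) : PowerSeries ℚ :=
  PowerSeries.mk fun n =>
    ∑ m ∈ Finset.range (n + 1), ((m + 1).factorial : ℚ) * PowerSeries.coeff n (G ^ m)

lemma coeff_pow_eq_zero_aux {G : PowerSeries ℚ} (h0 : PowerSeries.constantCoeff G = 0)
    {q m : ℕ} (h : q < m) : PowerSeries.coeff q (G ^ m) = 0 :=
  (PowerSeries.X_pow_dvd_iff.mp (pow_dvd_pow_of_dvd (PowerSeries.X_dvd_iff.mpr h0) m)) q h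

lemma coeff_mul_Kser {G : PowerSeries ℚ} (h0 : PowerSeries.constantCoeff G = 0)
    (P : PowerSeries ℚ) (n : ℕ) :
    PowerSeries.coeff n (P * Kser G)
      = ∑ m ∈ Finset.range (n + 1),
          ((m + 1).factorial : ℚ) * PowerSeries.coeff n (P * G ^ m) := by
  rw [PowerSeries.coeff_mul]
  have h1 : ∀ m : ℕ, ((m + 1).factorial : ℚ) * PowerSeries.coeff n (P * G ^ m)
      = ∑ p ∈ Finset.HasAntidiagonal.antidiagonal n,
          PowerSeries.coeff p.1 P * (((m + 1).factorial : ℚ) * PowerSeries.coeff p.2 (G ^ m)) := by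
    intro m
    rw [PowerSeries.coeff_mul, Finset.mul_sum]
    exact Finset.sum_congr rfl fun p _ => by ring
  simp_rw [h1]
  rw [Finset.sum_comm]
  refine Finset.sum_congr rfl fun p hp => ?_
  have hp2 : p.2 ≤ n := by
    have := Finset.HasAntidiagonal.mem_antidiagonal.mp hp; omega
  rw [← Finset.mul_sum, Kser, PowerSeries.coeff_mk]
  congr 1
  have hext : ∑ m ∈ Finset.range (p.2 + 1), ((m + 1).factorial : ℚ) * PowerSeries.coeff p.2 (G ^ m)
      = ∑ m ∈ Finset.range (n + 1), ((m + 1).factorial : ℚ) * PowerSeries.coeff p.2 (G ^ m) :=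
    Finset.sum_subset (Finset.range_subset_range.mpr (Nat.succ_le_succ hp2)) fun x hx hx' => by
      have hlt : p.2 < x := by simpa using hx'
      rw [coeff_pow_eq_zero_aux h0 hlt, mul_zero]
  exact hext

lemma Kser_inv {G : PowerSeries ℚ} (hG : IsCompInvOfF G) :
    PowerSeries.derivative ℚ G * Kser G = 1 := by
  ext n
  rw [coeff_mul_Kser hG.1]
  have h1 : ∀ m : ℕ, ((m + 1).factorial : ℚ) * PowerSeries.coeff n (d⁄dX ℚ G * G ^ m)
      = (m.factorial : ℚ) * ((n + 1 : ℚ) * PowerSeries.coeff (n + 1) (G ^ (m + 1))) := by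
    intro m
    have hd : d⁄dX ℚ (G ^ (m + 1)) = (m + 1) • (G ^ m * d⁄dX ℚ G) := by
      rw [Derivation.leibniz_pow]; simp [smul_eq_mul]
    have := congrArg (PowerSeries.coeff n) hd
    rw [PowerSeries.coeff_derivative, map_nsmul, nsmul_eq_mul] at this
    have hfac : ((m + 1).factorial : ℚ) = (m.factorial : ℚ) * (m + 1) := by
      rw [Nat.factorial_succ]; push_cast; ring
    rw [hfac, mul_comm (d⁄dX ℚ G) (G ^ m)] at *
    push_cast at this ⊢
    nlinarith [this]
  simp_rw [h1]
  have h2 : ∑ m ∈ Finset.range (n + 1),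
        (m.factorial : ℚ) * ((n + 1 : ℚ) * PowerSeries.coeff (n + 1) (G ^ (m + 1)))
      = (n + 1 : ℚ) * ∑ m ∈ Finset.Icc 1 (n + 1),
          ((m - 1).factorial : ℚ) * PowerSeries.coeff (n + 1) (G ^ m) := by
    rw [Finset.mul_sum, ← Finset.Ico_add_one_right_eq_Icc, Finset.sum_Ico_eq_sum_range]
    refine Finset.sum_congr (by congr 1 <;> omega) fun i _ => ?_
    rw [show 1 + i - 1 = i from by omega, show 1 + i = i + 1 from by omega]
    ring
  rw [h2, hG.2 (n + 1)]
  cases n with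
  | zero => simp
  | succ k =>
      rw [PowerSeries.coeff_X, PowerSeries.coeff_one]
      simp

theorem key_identity {G : PowerSeries ℚ} (hG : IsCompInvOfF G) :
    (PowerSeries.X : PowerSeries ℚ) * d⁄dX ℚ G = d⁄dX ℚ G * G + G * G := by
  have ha : (PowerSeries.X : PowerSeries ℚ) = G + G ^ 2 * Kser G := by
    ext n
    rw [← hG.2 n, map_add, coeff_mul_Kser hG.1]
    have h1 : ∀ m : ℕ, G ^ 2 * G ^ m = G ^ (m + 2) := fun m => by ring
    simp_rw [h1]
    have h2 : ∑ m ∈ Finset.range (n + 1), ((m + 1).factorial : ℚ) * PowerSeries.coeff n (G ^ (m + 2))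
        = ∑ m ∈ Finset.Icc 2 (n + 2), ((m - 1).factorial : ℚ) * PowerSeries.coeff n (G ^ m) := by
      rw [← Finset.Ico_add_one_right_eq_Icc, Finset.sum_Ico_eq_sum_range]
      refine Finset.sum_congr (by congr 1 <;> omega) fun i _ => ?_
      rw [show 2 + i - 1 = i + 1 from by omega, show 2 + i = i + 2 from by omega]
    rw [h2]
    have h3 : ∑ m ∈ Finset.Icc 2 (n + 2), ((m - 1).factorial : ℚ) * PowerSeries.coeff n (G ^ m)
        = ∑ m ∈ Finset.Icc 2 n, ((m - 1).factorial : ℚ) * PowerSeries.coeff n (G ^ m) := by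
      refine (Finset.sum_subset (Finset.Icc_subset_Icc_right (by omega)) fun x hx hx' => ?_).symm
      have : n < x := by
        simp only [Finset.mem_Icc] at hx hx'; omega
      rw [coeff_pow_eq_zero_aux hG.1 this, mul_zero]
    rw [h3]
    rcases Nat.eq_zero_or_pos n with hn | hn
    · subst hn
      simp [coeff_zero_eq_constantCoeff, hG.1]
    · rw [show Finset.Icc 1 n = insert 1 (Finset.Icc 2 n) from by ext x; simp; omega,
        Finset.sum_insert (by simp)]
      simp
  have hb := Kser_inv hG
  calc (PowerSeries.X : PowerSeries ℚ) * d⁄dX ℚ G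
      = (G + G ^ 2 * Kser G) * d⁄dX ℚ G := by rw [← ha]
    _ = d⁄dX ℚ G * G + (d⁄dX ℚ G * Kser G) * G ^ 2 := by ring
    _ = d⁄dX ℚ G * G + G * G := by rw [hb]; ring

/-- With `b_n = -[X^n] F^{<-1>}(X)`, one has `b_2 = 1` and, for all `n ≥ 3`,
`b_n = Σ_{k=2}^{n-2} ((k+1)·b_{k+1} + b_k)·b_{n-k}` (for `n = 3` the sum is
empty, so `b_3 = 0`). -/
theorem b_recursion (G : PowerSeries ℚ) (hG : IsCompInvOfF G)
    (b : ℕ → ℚ) (hb : ∀ n, b n = -(PowerSeries.coeff n G)) :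
    b 2 = 1 ∧
      ∀ n : ℕ, 3 ≤ n →
        b n = ∑ k ∈ Finset.Icc 2 (n - 2), ((k + 1 : ℚ) * b (k + 1) + b k) * b (n - k) := by
  have hg0 : PowerSeries.coeff 0 G = 0 := by
    rw [coeff_zero_eq_constantCoeff]; exact hG.1
  have hg1 : PowerSeries.coeff 1 G = 1 := by
    have := hG.2 1
    simp [PowerSeries.coeff_X] at this
    simpa using this
  have hg2 : PowerSeries.coeff 2 G = -1 := by
    have := hG.2 2
    rw [show Finset.Icc 1 2 = {1, 2} from rfl] at this
    simp [PowerSeries.coeff_X, pow_two, PowerSeries.coeff_mul,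
      Finset.Nat.sum_antidiagonal_eq_sum_range_succ_mk, Finset.sum_range_succ, hg0, hg1] at this
    linarith
  constructor
  · rw [hb]; rw [hg2]; norm_num
  intro n hn
  obtain ⟨j, rfl⟩ : ∃ j, n = j + 3 := ⟨n - 3, by omega⟩
  have key := congrArg (PowerSeries.coeff (j + 3)) (key_identity hG)
  rw [show j + 3 = (j + 2) + 1 from rfl, PowerSeries.coeff_succ_X_mul,
    PowerSeries.coeff_derivative, map_add, PowerSeries.coeff_mul, PowerSeries.coeff_mul,
    ← Finset.sum_add_distrib,
    Finset.Nat.sum_antidiagonal_eq_sum_range_succ_mk] at key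
  simp_rw [PowerSeries.coeff_derivative] at key
  have hset : Finset.range (j + 2 + 1 + 1) =
      insert 0 (insert 1 (insert (j + 2) (insert (j + 3) (Finset.Icc 2 (j + 1))))) := by
    ext x; simp [Finset.mem_range, Finset.mem_Icc]; omega
  rw [hset, Finset.sum_insert (by simp only [Finset.mem_insert, Finset.mem_Icc]; omega),
    Finset.sum_insert (by simp only [Finset.mem_insert, Finset.mem_Icc]; omega),
    Finset.sum_insert (by simp only [Finset.mem_insert, Finset.mem_Icc]; omega),
    Finset.sum_insert (by simp only [Finset.mem_Icc]; omega)] at key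
  rw [show (j:ℕ) + 2 + 1 - 0 = j + 3 from by omega, show (j:ℕ) + 2 + 1 - 1 = j + 2 from by omega,
    show (j:ℕ) + 2 + 1 - (j + 2) = 1 from by omega,
    show (j:ℕ) + 2 + 1 - (j + 3) = 0 from by omega,
    show (j:ℕ) + 2 + 1 = j + 3 from rfl] at key
  rw [hg0, hg1, hg2] at key
  simp only [hb]
  rw [show (j:ℕ) + 3 - 2 = j + 1 from by omega]
  have hS : ∑ k ∈ Finset.Icc 2 (j + 1),
        ((k + 1 : ℚ) * -(PowerSeries.coeff (k + 1) G) + -(PowerSeries.coeff k G)) *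
          -(PowerSeries.coeff (j + 3 - k) G)
      = ∑ k ∈ Finset.Icc 2 (j + 1),
        (PowerSeries.coeff (k + 1) G * ((k : ℚ) + 1) * PowerSeries.coeff (j + 3 - k) G +
          PowerSeries.coeff k G * PowerSeries.coeff (j + 3 - k) G) := by
    refine Finset.sum_congr rfl fun k _ => by push_cast; ring
  rw [hS]
  push_cast at key ⊢
  linarith [key]
end

section
/- Let F(X) = Σ_{n≥1} (n-1)!·X^n ∈ ℚ[[X]] with compositional inverse F^{<−1>}, and let A(X) = Σ_{n≥0} a_n·X^n where a_n is the number of stabilized-interval-free permutations of {1,…,n} (with a_0 = 1). Then A(X)·F^{<−1>}(X) = X in ℚ[[X]]; equivalently, A(X) = −X/B(X) where B = −F^{<−1>}. -/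
/-- A permutation `σ` of `{1,…,n}` (modeled as `Fin n`) is
stabilized-interval-free (SIF) if it stabilizes no proper nonempty
subinterval: there are no `i ≤ j` with `{i,…,j} ≠ [n]` and
`σ({i,…,j}) = {i,…,j}`. -/
def SIF {n : ℕ} (σ : Equiv.Perm (Fin n)) : Prop :=
  ∀ i j : Fin n, i ≤ j → Finset.Icc i j ≠ Finset.univ →
    Finset.image σ (Finset.Icc i j) ≠ Finset.Icc i j

/-- `a_n`, the number of SIF permutations of `{1,…,n}` (with `a_0 = 1`). -/
noncomputable def sifCount (n : ℕ) : ℕ := Nat.card {σ : Equiv.Perm (Fin n) // SIF σ}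

/-- The generating series `A(X) = Σ_{n≥0} a_n·X^n` of SIF permutations. -/
noncomputable def A : PowerSeries ℚ := PowerSeries.mk fun n => (sifCount n : ℚ)

open PowerSeries Finset Equiv

namespace SIFp


noncomputable def pcomp (f g : PowerSeries ℚ) : PowerSeries ℚ :=
  PowerSeries.mk fun n => ∑ m ∈ range (n+1), coeff m f * coeff n (g ^ m)

lemma coeff_pcomp (f g : PowerSeries ℚ) (n : ℕ) :
    coeff n (pcomp f g) = ∑ m ∈ range (n+1), coeff m f * coeff n (g ^ m) :=
  coeff_mk _ _

lemma coeff_pow_eq_zero {g : PowerSeries ℚ} (hg : constantCoeff g = 0)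
    {n m : ℕ} (h : n < m) : coeff n (g ^ m) = 0 := by
  have h1 : (X : ℚ⟦X⟧)^m ∣ g^m := pow_dvd_pow_of_dvd (X_dvd_iff.mpr hg) m
  rw [X_pow_dvd_iff] at h1
  exact h1 n h

lemma pcomp_X_right (f : PowerSeries ℚ) : pcomp f X = f := by
  ext n
  rw [coeff_pcomp]
  rw [Finset.sum_eq_single n]
  · simp [X_pow_eq, coeff_monomial]
  · intro m _ hm
    rw [X_pow_eq, coeff_monomial, if_neg (fun h => hm h.symm), mul_zero]
  · intro h; simp at h

lemma pcomp_X_left {g : PowerSeries ℚ} (hg : constantCoeff g = 0) :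
    pcomp X g = g := by
  ext n
  rw [coeff_pcomp]
  rw [Finset.sum_eq_single 1]
  · simp
  · intro m _ hm
    rw [coeff_X, if_neg hm, zero_mul]
  · intro h
    have hn : n = 0 := by simp only [mem_range] at h; omega
    subst hn
    simp [coeff_zero_eq_constantCoeff, hg]

lemma triangle (N : ℕ) (Ff : ℕ × ℕ → ℚ) (hF : ∀ p : ℕ × ℕ, N < p.1 + p.2 → Ff p = 0) :
    ∑ m ∈ range (N+1), ∑ p ∈ Finset.HasAntidiagonal.antidiagonal m, Ff p
      = ∑ u ∈ range (N+1), ∑ v ∈ range (N+1), Ff (u, v) := by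
  rw [← Finset.sum_product']
  have h1 : ∀ m ∈ range (N+1), ∑ p ∈ Finset.HasAntidiagonal.antidiagonal m, Ff p
      = ∑ p ∈ ((range (N+1) ×ˢ range (N+1)).filter
          (fun p : ℕ × ℕ => p.1 + p.2 ≤ N)).filter (fun p => p.1 + p.2 = m), Ff p := by
    intro m hm
    apply Finset.sum_congr _ (fun _ _ => rfl)
    ext p
    simp only [Finset.HasAntidiagonal.mem_antidiagonal, mem_filter, mem_product, mem_range, filter_filter] at *
    omega
  rw [Finset.sum_congr rfl h1]
  rw [Finset.sum_fiberwise_of_maps_to (g := fun p : ℕ × ℕ => p.1 + p.2)]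
  · apply Finset.sum_subset (Finset.filter_subset _ _)
    intro p _ hp
    simp only [mem_filter, not_and, not_le] at hp
    apply hF
    by_contra h
    push_neg at h
    simp only [mem_product, mem_range] at *
    omega
  · intro p hp
    simp only [mem_filter, mem_product, mem_range] at *
    omega

lemma pcomp_mul {g : PowerSeries ℚ} (hg : constantCoeff g = 0) (f₁ f₂ : PowerSeries ℚ) :
    pcomp (f₁ * f₂) g = pcomp f₁ g * pcomp f₂ g := by
  ext n
  rw [coeff_pcomp, coeff_mul]
  set Ff : ℕ × ℕ → ℚ := fun p =>
    coeff p.1 f₁ * coeff p.2 f₂ *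
      ∑ q ∈ Finset.HasAntidiagonal.antidiagonal n, coeff q.1 (g ^ p.1) * coeff q.2 (g ^ p.2) with hFf
  have hzero : ∀ p : ℕ × ℕ, n < p.1 + p.2 → Ff p = 0 := by
    intro p hp
    rw [hFf]
    simp only
    rw [Finset.sum_eq_zero, mul_zero]
    intro q hq
    rw [Finset.HasAntidiagonal.mem_antidiagonal] at hq
    rcases lt_or_ge q.1 p.1 with h | h
    · rw [coeff_pow_eq_zero hg h, zero_mul]
    · have : q.2 < p.2 := by omega
      rw [coeff_pow_eq_zero hg this, mul_zero]
  have lhs1 : ∀ m ∈ range (n+1), coeff m (f₁ * f₂) * coeff n (g ^ m)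
      = ∑ p ∈ Finset.HasAntidiagonal.antidiagonal m, Ff p := by
    intro m _
    rw [coeff_mul, Finset.sum_mul]
    apply Finset.sum_congr rfl
    intro p hp
    rw [Finset.HasAntidiagonal.mem_antidiagonal] at hp
    rw [hFf]
    simp only
    rw [← hp, pow_add, coeff_mul, Finset.mul_sum]
  rw [Finset.sum_congr rfl lhs1, triangle n Ff hzero]
  have rhs1 : ∀ q ∈ Finset.HasAntidiagonal.antidiagonal n,
      coeff q.1 (pcomp f₁ g) * coeff q.2 (pcomp f₂ g)
      = ∑ u ∈ range (n+1), ∑ v ∈ range (n+1),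
          (coeff u f₁ * coeff q.1 (g ^ u)) * (coeff v f₂ * coeff q.2 (g ^ v)) := by
    intro q hq
    rw [Finset.HasAntidiagonal.mem_antidiagonal] at hq
    have e1 : coeff q.1 (pcomp f₁ g) = ∑ u ∈ range (n+1), coeff u f₁ * coeff q.1 (g ^ u) := by
      rw [coeff_pcomp]
      apply Finset.sum_subset
      · intro x hx; simp only [mem_range] at *; omega
      · intro x _ hx
        simp only [mem_range, not_lt] at hx
        rw [coeff_pow_eq_zero hg (by omega), mul_zero]
    have e2 : coeff q.2 (pcomp f₂ g) = ∑ v ∈ range (n+1), coeff v f₂ * coeff q.2 (g ^ v) := by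
      rw [coeff_pcomp]
      apply Finset.sum_subset
      · intro x hx; simp only [mem_range] at *; omega
      · intro x _ hx
        simp only [mem_range, not_lt] at hx
        rw [coeff_pow_eq_zero hg (by omega), mul_zero]
    rw [e1, e2, Finset.sum_mul_sum]
  rw [Finset.sum_congr rfl rhs1]
  rw [Finset.sum_comm (s := Finset.HasAntidiagonal.antidiagonal n) (t := range (n+1))]
  apply Finset.sum_congr rfl; intro u _
  rw [Finset.sum_comm (s := Finset.HasAntidiagonal.antidiagonal n) (t := range (n+1))]
  apply Finset.sum_congr rfl; intro v _
  rw [hFf]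
  simp only
  rw [Finset.mul_sum]
  apply Finset.sum_congr rfl; intro q _
  ring

lemma pcomp_pow {g : PowerSeries ℚ} (hg : constantCoeff g = 0) (f : PowerSeries ℚ) (k : ℕ) :
    pcomp (f ^ k) g = (pcomp f g) ^ k := by
  induction k with
  | zero =>
    simp only [pow_zero]
    ext n
    rw [coeff_pcomp]
    rw [Finset.sum_eq_single 0]
    · simp
    · intro m _ hm
      rw [coeff_one, if_neg hm, zero_mul]
    · intro h; simp at h
  | succ k ih =>
    rw [pow_succ, pcomp_mul hg, ih, pow_succ]

lemma constantCoeff_pcomp (f g : PowerSeries ℚ) :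
    constantCoeff (pcomp f g) = constantCoeff f := by
  rw [← coeff_zero_eq_constantCoeff_apply, coeff_pcomp]
  simp

lemma pcomp_assoc {g h : PowerSeries ℚ} (hg : constantCoeff g = 0)
    (hh : constantCoeff h = 0) (f : PowerSeries ℚ) :
    pcomp (pcomp f g) h = pcomp f (pcomp g h) := by
  ext n
  rw [coeff_pcomp, coeff_pcomp]
  have e1 : ∀ m ∈ range (n+1), coeff m (pcomp f g) * coeff n (h ^ m)
      = ∑ l ∈ range (n+1), coeff l f * coeff m (g ^ l) * coeff n (h ^ m) := by
    intro m hm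
    rw [coeff_pcomp, Finset.sum_mul]
    apply Finset.sum_subset
    · intro x hx; simp only [mem_range] at *; omega
    · intro x _ hx
      simp only [mem_range, not_lt] at hx
      rw [coeff_pow_eq_zero hg (by simp only [mem_range] at hm; omega), mul_zero, zero_mul]
  have e2 : ∀ l ∈ range (n+1), coeff l f * coeff n ((pcomp g h) ^ l)
      = ∑ m ∈ range (n+1), coeff l f * coeff m (g ^ l) * coeff n (h ^ m) := by
    intro l _
    rw [← pcomp_pow hh, coeff_pcomp, Finset.mul_sum]
    apply Finset.sum_congr rfl
    intro m _
    ring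
  rw [Finset.sum_congr rfl e1, Finset.sum_congr rfl e2, Finset.sum_comm]

/-- The main algebraic reduction: if `KEY` holds, then the theorem follows. -/
theorem main_reduction
    (KEY : ∀ n : ℕ, ((n.factorial : ℚ)) = ∑ k ∈ range (n+1),
      (sifCount k : ℚ) * coeff n (F ^ k))
    (G : PowerSeries ℚ)
    (hG0 : constantCoeff G = 0)
    (hG : ∀ n : ℕ,
      ∑ m ∈ Finset.Icc 1 n, ((m - 1).factorial : ℚ) * PowerSeries.coeff n (G ^ m) =
        PowerSeries.coeff n (PowerSeries.X : PowerSeries ℚ)) :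
    A * G = (PowerSeries.X : PowerSeries ℚ) := by
  have hF0 : constantCoeff F = 0 := by
    rw [← coeff_zero_eq_constantCoeff_apply]
    simp [F, coeff_mk]
  have hFG : pcomp F G = X := by
    ext n
    rw [coeff_pcomp, ← hG n]
    have : range (n+1) = insert 0 (Finset.Icc 1 n) := by
      ext x; simp only [mem_range, mem_insert, Finset.mem_Icc]; omega
    rw [this, Finset.sum_insert (by simp)]
    rw [← coeff_zero_eq_constantCoeff_apply] at hF0
    rw [hF0, zero_mul, zero_add]
    apply Finset.sum_congr rfl
    intro m hm
    simp only [Finset.mem_Icc] at hm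
    congr 1
    simp only [F, coeff_mk, if_neg (by omega : ¬ m = 0)]
  have hAF : F = X * pcomp A F := by
    ext n
    cases n with
    | zero =>
      rw [coeff_zero_eq_constantCoeff_apply, hF0]
      simp [coeff_mul]
    | succ n =>
      rw [coeff_succ_X_mul, coeff_pcomp]
      have : coeff (n+1) F = (n.factorial : ℚ) := by
        simp only [F, coeff_mk, if_neg (Nat.succ_ne_zero n)]
        norm_num
      rw [this, KEY n]
      apply Finset.sum_congr rfl
      intro k _
      simp [A, coeff_mk]
  have final : X = G * A := by
    calc (X : PowerSeries ℚ) = pcomp F G := hFG.symm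
    _ = pcomp (X * pcomp A F) G := by rw [← hAF]
    _ = pcomp X G * pcomp (pcomp A F) G := pcomp_mul hG0 _ _
    _ = G * pcomp A (pcomp F G) := by rw [pcomp_X_left hG0, pcomp_assoc hF0 hG0]
    _ = G * pcomp A X := by rw [hFG]
    _ = G * A := by rw [pcomp_X_right]
  rw [mul_comm, ← final]



/-- `L n k` = sum over compositions of `n` into `k` positive parts of `∏ (pᵢ-1)!`. -/
noncomputable def L : ℕ → ℕ → ℚ
  | n, 0 => if n = 0 then 1 else 0
  | n, (k+1) => ∑ j ∈ range n, (j.factorial : ℚ) * L (n - j - 1) k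

lemma coeff_F_pow (k : ℕ) : ∀ n, coeff n (F ^ k) = L n k := by
  induction k with
  | zero =>
    intro n
    simp only [pow_zero, L, coeff_one]
  | succ k ih =>
    intro n
    rw [pow_succ, mul_comm, coeff_mul, Finset.Nat.sum_antidiagonal_eq_sum_range_succ_mk]
    rw [Finset.sum_range_succ']
    have h0 : coeff 0 F = 0 := by simp [F, coeff_mk]
    rw [h0, zero_mul, add_zero]
    simp only [L]
    apply Finset.sum_congr rfl
    intro j hj
    rw [ih]
    have hc : coeff (j+1) F = (j.factorial : ℚ) := by
      simp only [F, coeff_mk, if_neg (Nat.succ_ne_zero j)]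
      norm_num
    rw [hc, Nat.sub_sub]

/-- next element of `D` strictly above `c`, or `n` if none. -/
def nxt (n : ℕ) (D : Finset ℕ) (c : ℕ) : ℕ :=
  (insert n (D.filter (fun d => c < d))).min' (Finset.insert_nonempty _ _)

lemma nxt_le (n : ℕ) (D : Finset ℕ) (c : ℕ) : nxt n D c ≤ n :=
  Finset.min'_le _ _ (Finset.mem_insert_self _ _)

lemma lt_nxt (n : ℕ) (D : Finset ℕ) (c : ℕ) (hc : c < n) : c < nxt n D c := by
  apply (Finset.lt_min'_iff _ _).mpr
  intro y hy
  rcases Finset.mem_insert.mp hy with h | h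
  · omega
  · exact (Finset.mem_filter.mp h).2

lemma nxt_le_of_mem {n : ℕ} {D : Finset ℕ} {c d : ℕ} (hd : d ∈ D) (hcd : c < d) :
    nxt n D c ≤ d :=
  Finset.min'_le _ _ (Finset.mem_insert_of_mem (Finset.mem_filter.mpr ⟨hd, hcd⟩))

lemma nxt_cases (n : ℕ) (D : Finset ℕ) (c : ℕ) :
    nxt n D c = n ∨ (nxt n D c ∈ D ∧ c < nxt n D c) := by
  have := Finset.min'_mem (insert n (D.filter (fun d => c < d))) (Finset.insert_nonempty _ _)
  rcases Finset.mem_insert.mp this with h | h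
  · exact Or.inl h
  · right; exact ⟨(Finset.mem_filter.mp h).1, (Finset.mem_filter.mp h).2⟩

lemma nxt_max (n : ℕ) (D : Finset ℕ) (c : ℕ) (h : ∀ d ∈ D, d ≤ c) : nxt n D c = n := by
  apply le_antisymm (nxt_le n D c)
  apply Finset.le_min'
  intro y hy
  rcases Finset.mem_insert.mp hy with h1 | h1
  · omega
  · rcases Finset.mem_filter.mp h1 with ⟨h2, h3⟩
    exact absurd (h y h2) (not_le.mpr h3)

lemma nxt_insert_max {n c : ℕ} (D' : Finset ℕ) (hcn : c < n) (hD' : ∀ e ∈ D', e < c)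
    {d : ℕ} (hdc : d < c) :
    nxt n (insert c D') d = nxt c D' d := by
  apply le_antisymm
  · apply Finset.le_min'
    intro y hy
    rcases Finset.mem_insert.mp hy with h | h
    · subst h
      exact nxt_le_of_mem (Finset.mem_insert_self _ _) hdc
    · rcases Finset.mem_filter.mp h with ⟨h1, h2⟩
      exact nxt_le_of_mem (Finset.mem_insert_of_mem h1) h2
  · apply Finset.le_min'
    intro y hy
    rcases Finset.mem_insert.mp hy with h | h
    · subst h
      exact le_of_lt (lt_of_le_of_lt (nxt_le c D' d) hcn)
    · rcases Finset.mem_filter.mp h with ⟨h1, h2⟩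
      rcases Finset.mem_insert.mp h1 with h3 | h3
      · rw [h3]
        exact nxt_le c D' d
      · exact nxt_le_of_mem h3 h2

/-- weight of a core-set `D` inside `[0,n)`. -/
def Wt (n : ℕ) (D : Finset ℕ) : ℕ := ∏ c ∈ D, (nxt n D c - c - 1).factorial

noncomputable def SUMCset (n k : ℕ) : Finset (Finset ℕ) :=
  (range n).powerset.filter (fun D => D.card = k ∧ (0 < n → 0 ∈ D))

lemma mem_SUMCset {n k : ℕ} {D : Finset ℕ} :
    D ∈ SUMCset n k ↔ D ⊆ range n ∧ D.card = k ∧ (0 < n → 0 ∈ D) := by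
  simp [SUMCset]

lemma sumc (k : ℕ) : ∀ n, (∑ D ∈ SUMCset n k, (Wt n D : ℚ)) = L n k := by
  induction k with
  | zero =>
    intro n
    rcases Nat.eq_zero_or_pos n with h | h
    · subst h
      have hs : SUMCset 0 0 = {∅} := by
        ext D
        simp only [mem_SUMCset, Finset.range_zero, Finset.subset_empty, Finset.mem_singleton,
          Finset.card_eq_zero]
        constructor
        · rintro ⟨h1, _, _⟩; exact h1
        · rintro rfl; simp
      rw [hs]
      simp [Wt, L]
    · have hs : SUMCset n 0 = ∅ := by
        apply Finset.eq_empty_iff_forall_notMem.mpr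
        intro D hD
        rcases mem_SUMCset.mp hD with ⟨_, h1, h2⟩
        rw [Finset.card_eq_zero] at h1
        subst h1
        exact absurd (h2 h) (Finset.notMem_empty 0)
      rw [hs]
      simp only [Finset.sum_empty, L]
      rw [if_neg (by omega)]
  | succ k ih =>
    intro n
    have hL : L n (k+1) = ∑ c ∈ range n, ((n - c - 1).factorial : ℚ) * L c k := by
      show (∑ j ∈ range n, (j.factorial : ℚ) * L (n - j - 1) k) = _
      rw [← Finset.sum_range_reflect (fun c => ((n - c - 1).factorial : ℚ) * L c k) n]
      apply Finset.sum_congr rfl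
      intro j hj
      simp only [mem_range] at hj
      have e1 : n - (n - 1 - j) - 1 = j := by omega
      have e2 : n - 1 - j = n - j - 1 := by omega
      rw [e1, e2]
    rw [hL]
    have key : ∑ D ∈ SUMCset n (k+1), (Wt n D : ℚ)
        = ∑ p ∈ (range n).sigma (fun c => SUMCset c k),
            ((n - p.1 - 1).factorial : ℚ) * (Wt p.1 p.2 : ℚ) := by
      refine Finset.sum_bij'
        (fun D hD =>
          (⟨D.max' (Finset.card_pos.mp (by
              rcases mem_SUMCset.mp hD with ⟨_, h1, _⟩
              omega : 0 < D.card)),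
            D.erase (D.max' (Finset.card_pos.mp (by
              rcases mem_SUMCset.mp hD with ⟨_, h1, _⟩
              omega : 0 < D.card)))⟩ : (_ : ℕ) × Finset ℕ))
        (fun p _ => insert p.1 p.2) ?hi ?hj ?lft ?rgt ?val
      case hi =>
        intro D hD
        rcases mem_SUMCset.mp hD with ⟨hsub, hcard, hzero⟩
        have hne : D.Nonempty := Finset.card_pos.mp (by omega)
        apply Finset.mem_sigma.mpr
        constructor
        · exact hsub (D.max'_mem hne)
        · apply mem_SUMCset.mpr
          refine ⟨?_, ?_, ?_⟩
          · intro x hx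
            rcases Finset.mem_erase.mp hx with ⟨hne2, hmem⟩
            have := D.le_max' x hmem
            simp only [mem_range]
            omega
          · rw [Finset.card_erase_of_mem (D.max'_mem hne), hcard]
            omega
          · intro hpos
            replace hpos : 0 < D.max' hne := hpos
            have h0 : 0 ∈ D := by
              apply hzero
              have := hsub (D.max'_mem hne)
              simp only [mem_range] at this
              omega
            exact Finset.mem_erase.mpr ⟨by omega, h0⟩
      case hj =>
        rintro ⟨c, D'⟩ hp
        dsimp only
        rcases Finset.mem_sigma.mp hp with ⟨hc, hD'⟩
        rcases mem_SUMCset.mp hD' with ⟨hsub, hcard, hzero⟩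
        simp only [mem_range] at hc
        have hcD' : c ∉ D' := fun h => by
          have := hsub h; simp only [mem_range] at this; omega
        apply mem_SUMCset.mpr
        refine ⟨?_, ?_, ?_⟩
        · intro x hx
          rcases Finset.mem_insert.mp hx with h | h
          · subst h; exact Finset.mem_range.mpr hc
          · have := hsub h; simp only [mem_range] at this ⊢; omega
        · rw [Finset.card_insert_of_notMem hcD', hcard]
        · intro _
          rcases Nat.eq_zero_or_pos c with h | h
          · subst h; exact Finset.mem_insert_self _ _
          · exact Finset.mem_insert_of_mem (hzero h)
      case lft =>
        intro D hD
        dsimp only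
        exact Finset.insert_erase (D.max'_mem _)
      case rgt =>
        rintro ⟨c, D'⟩ hp
        dsimp only
        rcases Finset.mem_sigma.mp hp with ⟨hc, hD'⟩
        rcases mem_SUMCset.mp hD' with ⟨hsub, _, _⟩
        have hlt : ∀ e ∈ D', e < c := fun e he => by
          have := hsub he; simpa [mem_range] using this
        have hcD' : c ∉ D' := fun h => lt_irrefl c (hlt c h)
        have hmax : ∀ hh, (insert c D').max' hh = c := by
          intro hh
          apply le_antisymm
          · apply Finset.max'_le
            intro y hy
            rcases Finset.mem_insert.mp hy with h | h
            · omega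
            · exact le_of_lt (hlt y h)
          · exact Finset.le_max' _ _ (Finset.mem_insert_self _ _)
        refine Sigma.ext (hmax (Finset.insert_nonempty _ _)) ?_
        rw [hmax (Finset.insert_nonempty _ _)]
        exact heq_of_eq (Finset.erase_insert hcD')
      case val =>
        intro D hD
        dsimp only
        rcases mem_SUMCset.mp hD with ⟨hsub, hcard, hzero⟩
        have hne : D.Nonempty := Finset.card_pos.mp (by omega)
        have hcmem : D.max' _ ∈ D := D.max'_mem (Finset.card_pos.mp (by omega))
        set c := D.max' (Finset.card_pos.mp (by omega : 0 < D.card)) with hcdef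
        have hcn : c < n := by
          have := hsub hcmem; simpa [mem_range] using this
        have hlt : ∀ e ∈ D.erase c, e < c := fun e he => by
          rcases Finset.mem_erase.mp he with ⟨h1, h2⟩
          have := D.le_max' e h2
          omega
        have hnat : Wt n D = (n - c - 1).factorial * Wt c (D.erase c) := by
          rw [Wt, ← Finset.mul_prod_erase D _ hcmem]
          congr 1
          · rw [nxt_max n D c (fun d hd => D.le_max' d hd)]
          · apply Finset.prod_congr rfl
            intro d hd
            have hDi : D = insert c (D.erase c) := (Finset.insert_erase hcmem).symm
            have hnn : nxt n D d = nxt c (D.erase c) d := by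
              conv_lhs => rw [hDi]
              exact nxt_insert_max _ hcn hlt (hlt d hd)
            rw [hnn]
        show (Wt n D : ℚ) = _
        rw [hnat]
        push_cast
        ring
    rw [key]
    simp only [Finset.sum_sigma]
    apply Finset.sum_congr rfl
    intro c _
    rw [← Finset.mul_sum, ih c]



def assemble {α β : Type*} (f : α → β) (σs : (b : β) → Equiv.Perm {x : α // f x = b}) :
    Equiv.Perm α where
  toFun a := (σs (f a) ⟨a, rfl⟩).val
  invFun a := ((σs (f a)).symm ⟨a, rfl⟩).val
  left_inv a := by
    have key : ∀ (b : β) (x : α) (hx : f x = b),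
        ((σs (f x)).symm ⟨x, rfl⟩).val = ((σs b).symm ⟨x, hx⟩).val := by
      intro b x hx; subst hx; rfl
    have h2 := (σs (f a) ⟨a, rfl⟩).2
    dsimp only
    rw [key (f a) _ h2]
    rw [show (⟨(σs (f a) ⟨a, rfl⟩).val, h2⟩ : {x : α // f x = f a}) = σs (f a) ⟨a, rfl⟩ from rfl]
    rw [Equiv.symm_apply_apply]
  right_inv a := by
    have key : ∀ (b : β) (x : α) (hx : f x = b),
        ((σs (f x)) ⟨x, rfl⟩).val = ((σs b) ⟨x, hx⟩).val := by
      intro b x hx; subst hx; rfl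
    have h2 := ((σs (f a)).symm ⟨a, rfl⟩).2
    dsimp only
    rw [key (f a) _ h2]
    rw [show (⟨((σs (f a)).symm ⟨a, rfl⟩).val, h2⟩ : {x : α // f x = f a})
        = (σs (f a)).symm ⟨a, rfl⟩ from rfl]
    rw [Equiv.apply_symm_apply]

def permFiberEquiv {α β : Type*} (f : α → β) :
    {π : Equiv.Perm α // ∀ x, f (π x) = f x} ≃ ((b : β) → Equiv.Perm {x : α // f x = b}) where
  toFun π b := Equiv.Perm.subtypePerm π.1 (fun x => by
    constructor
    · intro h; rw [← π.2 x]; exact h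
    · intro h; rw [π.2 x]; exact h)
  invFun σs := ⟨assemble f σs, fun a => (σs (f a) ⟨a, rfl⟩).2⟩
  left_inv π := by
    apply Subtype.ext
    apply Equiv.ext
    intro a
    rfl
  right_inv σs := by
    funext b
    apply Equiv.ext
    intro x
    apply Subtype.ext
    have key : ∀ (b' : β) (y : α) (hy : f y = b'),
        ((σs (f y)) ⟨y, rfl⟩).val = ((σs b') ⟨y, hy⟩).val := by
      intro b' y hy; subst hy; rfl
    exact key b x.val x.2

def subtypeProdFst {α β : Type*} (p : α → Prop) :
    {x : α × β // p x.1} ≃ {a : α // p a} × β where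
  toFun x := (⟨x.1.1, x.2⟩, x.1.2)
  invFun y := ⟨(y.1.1, y.2), y.1.2⟩
  left_inv x := rfl
  right_inv y := rfl



variable {n : ℕ} [NeZero n]

/-! ### generic finset helpers -/

lemma image_eq_of_subset {α : Type*} [DecidableEq α] {π : Equiv.Perm α} {S : Finset α}
    (h : S.image ⇑π ⊆ S) : S.image ⇑π = S :=
  Finset.eq_of_subset_of_card_le h (le_of_eq (Finset.card_image_of_injective S π.injective).symm)

lemma stab_mem_iff {α : Type*} [DecidableEq α] {π : Equiv.Perm α} {S : Finset α}
    (h : S.image ⇑π = S) (x : α) : π x ∈ S ↔ x ∈ S := by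
  constructor
  · intro hx
    rw [← h] at hx
    rcases Finset.mem_image.mp hx with ⟨y, hy, hyx⟩
    rwa [← π.injective hyx]
  · intro hx
    rw [← h]
    exact Finset.mem_image_of_mem _ hx

lemma stab_compl {α : Type*} [DecidableEq α] [Fintype α] {π : Equiv.Perm α} {S : Finset α}
    (h : S.image ⇑π = S) : (univ \ S).image ⇑π = univ \ S := by
  apply image_eq_of_subset
  intro y hy
  rcases Finset.mem_image.mp hy with ⟨x, hx, rfl⟩
  rcases Finset.mem_sdiff.mp hx with ⟨-, hx2⟩
  apply Finset.mem_sdiff.mpr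
  exact ⟨Finset.mem_univ _, fun hc => hx2 ((stab_mem_iff h x).mp hc)⟩

lemma convex_eq_Icc {α : Type*} [LinearOrder α] [LocallyFiniteOrder α] (S : Finset α)
    (hS : S.Nonempty)
    (hconv : ∀ x y z : α, x ∈ S → z ∈ S → x ≤ y → y ≤ z → y ∈ S) :
    S = Finset.Icc (S.min' hS) (S.max' hS) := by
  ext y
  constructor
  · intro hy
    exact Finset.mem_Icc.mpr ⟨S.min'_le y hy, S.le_max' y hy⟩
  · intro hy
    rcases Finset.mem_Icc.mp hy with ⟨h1, h2⟩
    exact hconv _ _ _ (S.min'_mem hS) (S.max'_mem hS) h1 h2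

/-! ### the greatest-core-below map -/

variable (C : Finset (Fin n))

noncomputable def gC (x : Fin n) : Fin n := WithBot.unbotD x ((C.filter (fun c => c ≤ x)).max)

variable {C}

lemma filter_le_nonempty (h0 : (0 : Fin n) ∈ C) (x : Fin n) :
    (C.filter (fun c => c ≤ x)).Nonempty :=
  ⟨0, Finset.mem_filter.mpr ⟨h0, Fin.zero_le x⟩⟩

lemma gC_eq (h0 : (0 : Fin n) ∈ C) (x : Fin n) :
    gC C x = (C.filter (fun c => c ≤ x)).max' (filter_le_nonempty h0 x) := by
  rw [gC, ← Finset.coe_max' (filter_le_nonempty h0 x)]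
  rfl

lemma gC_mem (h0 : (0 : Fin n) ∈ C) (x : Fin n) : gC C x ∈ C := by
  rw [gC_eq h0]
  have := Finset.max'_mem (C.filter (fun c => c ≤ x)) (filter_le_nonempty h0 x)
  exact (Finset.mem_filter.mp this).1

lemma gC_le (h0 : (0 : Fin n) ∈ C) (x : Fin n) : gC C x ≤ x := by
  rw [gC_eq h0]
  have := Finset.max'_mem (C.filter (fun c => c ≤ x)) (filter_le_nonempty h0 x)
  exact (Finset.mem_filter.mp this).2

lemma gC_ge (h0 : (0 : Fin n) ∈ C) {c x : Fin n} (hc : c ∈ C) (hcx : c ≤ x) :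
    c ≤ gC C x := by
  rw [gC_eq h0 x]
  exact Finset.le_max' (C.filter (fun c' => c' ≤ x)) c (Finset.mem_filter.mpr ⟨hc, hcx⟩)

lemma gC_self (h0 : (0 : Fin n) ∈ C) {x : Fin n} (hx : x ∈ C) : gC C x = x :=
  le_antisymm (gC_le h0 x) (gC_ge h0 hx le_rfl)

lemma gC_mono (h0 : (0 : Fin n) ∈ C) {x y : Fin n} (hxy : x ≤ y) : gC C x ≤ gC C y :=
  gC_ge h0 (gC_mem h0 x) (le_trans (gC_le h0 x) hxy)

noncomputable def fC (C : Finset (Fin n)) (x : Fin n) : Option (Fin n) :=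
  if x ∈ C then none else some (gC C x)

lemma fC_eq_none_iff {x : Fin n} : fC C x = none ↔ x ∈ C := by
  rw [fC]
  split
  · simpa
  · simpa

lemma fC_eq_some_iff {x c : Fin n} : fC C x = some c ↔ x ∉ C ∧ gC C x = c := by
  rw [fC]
  split
  · simp_all
  · simp_all


/-! ### the union of stabilized intervals avoiding 0, and the core set -/

def Uset (π : Equiv.Perm (Fin n)) : Finset (Fin n) :=
  univ.filter (fun x => ∃ i j : Fin n, 0 < i ∧ i ≤ j ∧ x ∈ Finset.Icc i j ∧
    (Finset.Icc i j).image ⇑π = Finset.Icc i j)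

def CoreC (π : Equiv.Perm (Fin n)) : Finset (Fin n) := univ \ Uset π

lemma mem_Uset {π : Equiv.Perm (Fin n)} {x : Fin n} :
    x ∈ Uset π ↔ ∃ i j : Fin n, 0 < i ∧ i ≤ j ∧ x ∈ Finset.Icc i j ∧
      (Finset.Icc i j).image ⇑π = Finset.Icc i j := by
  rw [Uset, Finset.mem_filter]
  simp only [Finset.mem_univ, true_and]

lemma mem_CoreC {π : Equiv.Perm (Fin n)} {x : Fin n} :
    x ∈ CoreC π ↔ x ∉ Uset π := by
  rw [CoreC, Finset.mem_sdiff]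
  simp only [Finset.mem_univ, true_and]

lemma zero_mem_CoreC (π : Equiv.Perm (Fin n)) : (0 : Fin n) ∈ CoreC π := by
  rw [mem_CoreC]
  intro h
  rcases mem_Uset.mp h with ⟨i, j, hi, hij, hmem, hstab⟩
  rcases Finset.mem_Icc.mp hmem with ⟨h1, _⟩
  exact absurd (le_antisymm (Fin.zero_le i) h1).symm (ne_of_gt hi)

lemma Uset_stab_iff (π : Equiv.Perm (Fin n)) (x : Fin n) :
    π x ∈ Uset π ↔ x ∈ Uset π := by
  constructor
  · intro h
    rcases mem_Uset.mp h with ⟨i, j, hi, hij, hmem, hstab⟩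
    exact mem_Uset.mpr ⟨i, j, hi, hij, (stab_mem_iff hstab x).mp hmem, hstab⟩
  · intro h
    rcases mem_Uset.mp h with ⟨i, j, hi, hij, hmem, hstab⟩
    exact mem_Uset.mpr ⟨i, j, hi, hij, (stab_mem_iff hstab x).mpr hmem, hstab⟩

lemma witness_subset_Uset {π : Equiv.Perm (Fin n)} {i j : Fin n} (hi : 0 < i) (hij : i ≤ j)
    (hstab : (Finset.Icc i j).image ⇑π = Finset.Icc i j) :
    Finset.Icc i j ⊆ Uset π := fun y hy => mem_Uset.mpr ⟨i, j, hi, hij, hy, hstab⟩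

/-! ### the enumeration of a core set and the pattern permutation -/

variable (C)

noncomputable def cc : Fin C.card → Fin n := fun i => C.orderEmbOfFin rfl i

variable {C}

lemma cc_strictMono : StrictMono (cc C) := (C.orderEmbOfFin rfl).strictMono

lemma cc_mem (i : Fin C.card) : cc C i ∈ C := Finset.orderEmbOfFin_mem C rfl i

lemma cc_surj {x : Fin n} (hx : x ∈ C) : ∃ i, cc C i = x := by
  have := Finset.range_orderEmbOfFin C (rfl : C.card = C.card)
  rw [Set.ext_iff] at this
  have h2 := (this x).mpr (by simpa using hx)
  rcases h2 with ⟨i, hi⟩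
  exact ⟨i, hi⟩

lemma cc_zero (h0 : (0 : Fin n) ∈ C) (hk : 0 < C.card) : cc C ⟨0, hk⟩ = 0 := by
  rcases cc_surj h0 with ⟨l, hl⟩
  have : cc C ⟨0, hk⟩ ≤ cc C l := (cc_strictMono).monotone (by
    simp only [Fin.mk_le_mk, Fin.le_def]
    exact Nat.zero_le _)
  rw [hl] at this
  exact le_antisymm this (Fin.zero_le _)

lemma card_pos_of_zero_mem (h0 : (0 : Fin n) ∈ C) : 0 < C.card :=
  Finset.card_pos.mpr ⟨0, h0⟩

noncomputable def coreEquivFiber : Fin C.card ≃ {x : Fin n // fC C x = none} :=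
  (C.orderIsoOfFin rfl).toEquiv.trans (Equiv.subtypeEquivRight (fun x => fC_eq_none_iff.symm))

lemma coreEquivFiber_val (i : Fin C.card) : ((coreEquivFiber (C := C)) i).val = cc C i := rfl

noncomputable def pattAux (π : Equiv.Perm (Fin n)) (hπ : ∀ x, fC C (π x) = fC C x) :
    Equiv.Perm (Fin C.card) :=
  (Equiv.permCongr (coreEquivFiber (C := C)).symm)
    (Equiv.Perm.subtypePerm π (fun x => by
      constructor
      · intro h; rw [← hπ x]; exact h
      · intro h; rw [hπ x]; exact h))

noncomputable def patt (π : Equiv.Perm (Fin n)) : Equiv.Perm (Fin C.card) :=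
  if h : ∀ x, fC C (π x) = fC C x then pattAux (C := C) π h else 1

lemma patt_apply {π : Equiv.Perm (Fin n)} (hπ : ∀ x, fC C (π x) = fC C x) (i : Fin C.card) :
    cc C (patt (C := C) π i) = π (cc C i) := by
  rw [patt, dif_pos hπ, pattAux]
  rw [← coreEquivFiber_val, ← coreEquivFiber_val]
  rw [Equiv.permCongr_apply]
  simp only [Equiv.symm_symm, Equiv.apply_symm_apply]
  rfl


lemma patt_image_iff {π : Equiv.Perm (Fin n)} (hπ : ∀ x, fC C (π x) = fC C x)
    (S : Finset (Fin C.card)) :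
    S.image (patt (C := C) π) = S ↔ (S.image (cc C)).image ⇑π = S.image (cc C) := by
  have hcomm : (S.image (patt (C := C) π)).image (cc C) = (S.image (cc C)).image ⇑π := by
    rw [Finset.image_image, Finset.image_image]
    apply Finset.image_congr
    intro l _
    exact patt_apply hπ l
  constructor
  · intro h
    rw [← hcomm, h]
  · intro h
    rw [← hcomm] at h
    exact Finset.image_injective (cc_strictMono (C := C)).injective h

lemma fC_pres (π : Equiv.Perm (Fin n)) (x : Fin n) :
    fC (CoreC π) (π x) = fC (CoreC π) x := by
  set C := CoreC π with hCdef
  have h0 : (0 : Fin n) ∈ C := zero_mem_CoreC π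
  by_cases hx : x ∈ C
  · have hπx : π x ∈ C := by
      rw [hCdef, mem_CoreC] at hx ⊢
      rw [Uset_stab_iff]
      exact hx
    simp only [fC, if_pos hx, if_pos hπx]
  · have hxU : x ∈ Uset π := by
      by_contra hc
      exact hx (mem_CoreC.mpr hc)
    have hπxU : π x ∈ Uset π := (Uset_stab_iff π x).mpr hxU
    have hπx : π x ∉ C := by
      rw [hCdef, mem_CoreC]
      exact not_not.mpr hπxU
    rcases mem_Uset.mp hxU with ⟨i, j, hi, hij, hmem, hstab⟩
    have hπmem : π x ∈ Finset.Icc i j := (stab_mem_iff hstab x).mpr hmem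
    have hIU : Finset.Icc i j ⊆ Uset π := witness_subset_Uset hi hij hstab
    have hfilter : C.filter (fun c => c ≤ π x) = C.filter (fun c => c ≤ x) := by
      ext c
      simp only [Finset.mem_filter, and_congr_right_iff]
      intro hcC
      have hcI : c ∉ Finset.Icc i j := fun hcI => (mem_CoreC.mp hcC) (hIU hcI)
      constructor
      · intro h
        have hlt : c < i := by
          by_contra hge
          push_neg at hge
          exact hcI (Finset.mem_Icc.mpr ⟨hge, le_trans h (Finset.mem_Icc.mp hπmem).2⟩)
        exact le_trans (le_of_lt hlt) (Finset.mem_Icc.mp hmem).1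
      · intro h
        have hlt : c < i := by
          by_contra hge
          push_neg at hge
          exact hcI (Finset.mem_Icc.mpr ⟨hge, le_trans h (Finset.mem_Icc.mp hmem).2⟩)
        exact le_trans (le_of_lt hlt) (Finset.mem_Icc.mp hπmem).1
    have hg : gC C (π x) = gC C x := by
      rw [gC_eq h0, gC_eq h0]
      apply le_antisymm
      · apply Finset.max'_le
        intro y hy
        exact Finset.le_max' _ y (hfilter ▸ hy)
      · apply Finset.max'_le
        intro y hy
        exact Finset.le_max' _ y (hfilter.symm ▸ hy)
    simp only [fC, if_neg hx, if_neg hπx, hg]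

lemma mem_S_iff {i j : Fin C.card} (h0 : (0 : Fin n) ∈ C) {y : Fin n}
    (hy : y ∈ C) (hlow : cc C i ≤ y) (hhigh : y ≤ cc C j) :
    y ∈ (Finset.Icc i j).image (cc C) := by
  rcases cc_surj hy with ⟨m, rfl⟩
  apply Finset.mem_image_of_mem
  rw [Finset.mem_Icc]
  constructor
  · exact ((cc_strictMono (C := C)).le_iff_le).mp hlow
  · exact ((cc_strictMono (C := C)).le_iff_le).mp hhigh

lemma S_bounds {i j : Fin C.card} {y : Fin n}
    (hy : y ∈ (Finset.Icc i j).image (cc C)) : cc C i ≤ y ∧ y ≤ cc C j := by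
  rcases Finset.mem_image.mp hy with ⟨l, hl, rfl⟩
  rcases Finset.mem_Icc.mp hl with ⟨h1, h2⟩
  exact ⟨(cc_strictMono (C := C)).monotone h1, (cc_strictMono (C := C)).monotone h2⟩

lemma patt_SIF (π : Equiv.Perm (Fin n)) : SIF (patt (C := CoreC π) π) := by
  set C := CoreC π with hCdef
  have h0 : (0 : Fin n) ∈ C := zero_mem_CoreC π
  have hπ : ∀ x, fC C (π x) = fC C x := fC_pres π
  intro i j hij hne himg
  set S := (Finset.Icc i j).image (cc C) with hSdef
  have hSstab : S.image ⇑π = S := (patt_image_iff hπ _).mp himg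
  set I := univ.filter (fun x => gC C x ∈ S) with hIdef
  have hmemI : ∀ x, x ∈ I ↔ gC C x ∈ S := by
    intro x
    rw [hIdef, Finset.mem_filter]
    simp only [Finset.mem_univ, true_and]
  have hcciI : cc C i ∈ I := by
    rw [hmemI, gC_self h0 (cc_mem i)]
    exact Finset.mem_image_of_mem _ (Finset.mem_Icc.mpr ⟨le_rfl, hij⟩)
  have hIne : I.Nonempty := ⟨cc C i, hcciI⟩
  have hIconv : ∀ x y z : Fin n, x ∈ I → z ∈ I → x ≤ y → y ≤ z → y ∈ I := by
    intro x y z hx hz hxy hyz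
    rw [hmemI] at hx hz ⊢
    apply mem_S_iff h0 (gC_mem h0 y)
    · exact le_trans (S_bounds hx).1 (gC_mono h0 hxy)
    · exact le_trans (gC_mono h0 hyz) (S_bounds hz).2
  have hIstab : I.image ⇑π = I := by
    apply image_eq_of_subset
    intro y hy
    rcases Finset.mem_image.mp hy with ⟨x, hx, rfl⟩
    rw [hmemI] at hx ⊢
    by_cases hxC : x ∈ C
    · have hxS : x ∈ S := by rw [← gC_self h0 hxC]; exact hx
      rcases Finset.mem_image.mp hxS with ⟨l, hl, rfl⟩
      rw [← patt_apply hπ l]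
      rw [gC_self h0 (cc_mem _)]
      apply Finset.mem_image_of_mem
      rw [← himg]
      exact Finset.mem_image_of_mem _ hl
    · have hfx := hπ x
      simp only [fC, if_neg hxC] at hfx
      by_cases hπxC : π x ∈ C
      · rw [if_pos hπxC] at hfx
        exact absurd hfx (by simp)
      · rw [if_neg hπxC, Option.some_inj] at hfx
        rw [hfx]
        exact hx
  have hk0 : 0 < C.card := card_pos_of_zero_mem h0
  have hccmemC : ∀ l : Fin C.card, cc C l ∈ C := cc_mem
  by_cases hiz : i = (⟨0, hk0⟩ : Fin C.card)
  · -- i is the least index: pass to the complement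
    set T := (univ \ I : Finset (Fin n)) with hTdef
    have hTstab : T.image ⇑π = T := stab_compl hIstab
    have hl0 : ∃ l : Fin C.card, l ∉ Finset.Icc i j := by
      by_contra hc
      push_neg at hc
      exact hne (Finset.eq_univ_iff_forall.mpr hc)
    rcases hl0 with ⟨l₀, hl₀⟩
    have hccl₀T : cc C l₀ ∈ T := by
      rw [hTdef, Finset.mem_sdiff]
      refine ⟨Finset.mem_univ _, ?_⟩
      rw [hmemI, gC_self h0 (cc_mem l₀)]
      intro hc
      rcases Finset.mem_image.mp hc with ⟨l, hl, hle⟩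
      exact hl₀ ((cc_strictMono (C := C)).injective hle ▸ hl)
    have hTne : T.Nonempty := ⟨cc C l₀, hccl₀T⟩
    have h0I : (0 : Fin n) ∈ I := by
      rw [hmemI, gC_self h0 h0]
      rw [← cc_zero h0 hk0, ← hiz]
      exact Finset.mem_image_of_mem _ (Finset.mem_Icc.mpr ⟨le_rfl, hij⟩)
    have h0T : (0 : Fin n) ∉ T := by
      rw [hTdef, Finset.mem_sdiff]
      intro hc
      exact hc.2 h0I
    have hTconv : ∀ x y z : Fin n, x ∈ T → z ∈ T → x ≤ y → y ≤ z → y ∈ T := by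
      intro x y z hx hz hxy hyz
      rw [hTdef, Finset.mem_sdiff] at hx hz ⊢
      refine ⟨Finset.mem_univ _, ?_⟩
      intro hyI
      apply hx.2
      rw [hmemI] at hyI ⊢
      apply mem_S_iff h0 (gC_mem h0 x)
      · rw [hiz, cc_zero h0 hk0]
        exact Fin.zero_le _
      · exact le_trans (gC_mono h0 hxy) (S_bounds hyI).2
    have hTIcc := convex_eq_Icc T hTne hTconv
    have hminpos : 0 < T.min' hTne := by
      rcases Nat.eq_zero_or_pos (T.min' hTne).val with hzz | hzz
      · exfalso
        apply h0T
        have : T.min' hTne = 0 := by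
          apply Fin.ext
          rw [hzz]
          rfl
        rw [← this]
        exact T.min'_mem hTne
      · exact hzz
    have hccl₀U : cc C l₀ ∈ Uset π := by
      apply witness_subset_Uset hminpos (T.min'_le _ (T.max'_mem hTne)) (by rw [← hTIcc]; exact hTstab)
      rw [← hTIcc]
      exact hccl₀T
    exact (mem_CoreC.mp (hccmemC l₀)) hccl₀U
  · -- i is not the least index
    have hi0 : (0 : Fin n) ∉ I := by
      rw [hmemI, gC_self h0 h0]
      intro hc
      rcases Finset.mem_image.mp hc with ⟨l, hl, hle⟩
      have hlz : l = ⟨0, hk0⟩ := by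
        apply (cc_strictMono (C := C)).injective
        rw [hle, cc_zero h0 hk0]
      rw [hlz] at hl
      apply hiz
      apply le_antisymm (Finset.mem_Icc.mp hl).1
      exact Fin.mk_le_of_le_val (Nat.zero_le _)
    have hIIcc := convex_eq_Icc I hIne hIconv
    have hminpos : 0 < I.min' hIne := by
      rcases Nat.eq_zero_or_pos (I.min' hIne).val with hzz | hzz
      · exfalso
        apply hi0
        have : I.min' hIne = 0 := by
          apply Fin.ext
          rw [hzz]
          rfl
        rw [← this]
        exact I.min'_mem hIne
      · exact hzz
    have hcciU : cc C i ∈ Uset π := by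
      apply witness_subset_Uset hminpos (I.min'_le _ (I.max'_mem hIne)) (by rw [← hIIcc]; exact hIstab)
      rw [← hIIcc]
      exact hcciI
    exact (mem_CoreC.mp (hccmemC i)) hcciU


lemma coreC_eq {π : Equiv.Perm (Fin n)} (h0 : (0 : Fin n) ∈ C)
    (hf : ∀ x, fC C (π x) = fC C x) (hs : SIF (patt (C := C) π)) : CoreC π = C := by
  have hπC : ∀ x, x ∈ C → π x ∈ C := by
    intro x hx
    have := hf x
    simp only [fC, if_pos hx] at this
    by_contra hc
    rw [if_neg hc] at this
    exact Option.some_ne_none _ this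
  have incl1 : ∀ x : Fin n, x ∉ C → x ∈ Uset π := by
    intro x hx
    set c := gC C x with hcdef
    have hc : c ∈ C := gC_mem h0 x
    set B := univ.filter (fun y => fC C y = some c) with hBdef
    have hmemB : ∀ y, y ∈ B ↔ (y ∉ C ∧ gC C y = c) := by
      intro y
      rw [hBdef, Finset.mem_filter]
      simp only [Finset.mem_univ, true_and]
      exact fC_eq_some_iff
    have hxB : x ∈ B := (hmemB x).mpr ⟨hx, rfl⟩
    have hBne : B.Nonempty := ⟨x, hxB⟩
    have hBconv : ∀ y₁ y y₂ : Fin n, y₁ ∈ B → y₂ ∈ B → y₁ ≤ y → y ≤ y₂ → y ∈ B := by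
      intro y₁ y y₂ h1 h2 h12 h23
      rw [hmemB] at h1 h2 ⊢
      have hcy : c ≤ y := le_trans (h1.2 ▸ gC_le h0 y₁) h12
      have hyC : y ∉ C := by
        intro hyC
        have hy_le : y ≤ c := h2.2 ▸ gC_ge h0 hyC h23
        have hyc : y = c := le_antisymm hy_le hcy
        have h1c : y₁ = c := le_antisymm (hyc ▸ h12) (h1.2 ▸ gC_le h0 y₁)
        exact h1.1 (h1c ▸ hc)
      refine ⟨hyC, le_antisymm ?_ (gC_ge h0 hc hcy)⟩
      exact h2.2 ▸ gC_mono h0 h23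
    have hBstab : B.image ⇑π = B := by
      apply image_eq_of_subset
      intro y hy
      rcases Finset.mem_image.mp hy with ⟨z, hz, rfl⟩
      rw [hmemB] at hz ⊢
      have := hf z
      rw [fC_eq_some_iff.mpr hz] at this  -- this : fC C (π z) = some c
      exact fC_eq_some_iff.mp this
    have h0B : (0 : Fin n) ∉ B := by
      rw [hmemB]
      intro hcc
      exact hcc.1 h0
    have hBIcc := convex_eq_Icc B hBne hBconv
    have hminpos : 0 < B.min' hBne := by
      rcases Nat.eq_zero_or_pos (B.min' hBne).val with hzz | hzz
      · exfalso
        apply h0B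
        have : B.min' hBne = 0 := by
          apply Fin.ext
          rw [hzz]
          rfl
        rw [← this]
        exact B.min'_mem hBne
      · exact hzz
    apply witness_subset_Uset hminpos (B.min'_le _ (B.max'_mem hBne))
      (by rw [← hBIcc]; exact hBstab)
    rw [← hBIcc]
    exact hxB
  have incl2 : ∀ x : Fin n, x ∈ Uset π → x ∉ C := by
    intro x hxU hx
    rcases mem_Uset.mp hxU with ⟨a, b, ha, hab, hmem, hstab⟩
    rcases cc_surj hx with ⟨l₀, hl₀⟩
    set T := univ.filter (fun l : Fin C.card => cc C l ∈ Finset.Icc a b) with hTdef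
    have hmemT : ∀ l, l ∈ T ↔ cc C l ∈ Finset.Icc a b := by
      intro l
      rw [hTdef, Finset.mem_filter]
      simp only [Finset.mem_univ, true_and]
    have hl₀T : l₀ ∈ T := (hmemT l₀).mpr (hl₀ ▸ hmem)
    have hTne : T.Nonempty := ⟨l₀, hl₀T⟩
    have hTconv : ∀ l₁ l l₂ : Fin C.card, l₁ ∈ T → l₂ ∈ T → l₁ ≤ l → l ≤ l₂ → l ∈ T := by
      intro l₁ l l₂ h1 h2 h12 h23
      rw [hmemT] at h1 h2 ⊢
      rw [Finset.mem_Icc] at h1 h2 ⊢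
      exact ⟨le_trans h1.1 ((cc_strictMono (C := C)).monotone h12),
        le_trans ((cc_strictMono (C := C)).monotone h23) h2.2⟩
    have hφ : ∀ y, fC C (π y) = fC C y := hf
    have hTstab : T.image (patt (C := C) π) = T := by
      apply image_eq_of_subset
      intro m hm
      rcases Finset.mem_image.mp hm with ⟨l, hl, rfl⟩
      rw [hmemT] at hl ⊢
      rw [patt_apply hφ l]
      rw [← hstab]
      exact Finset.mem_image_of_mem _ hl
    have hk0 : 0 < C.card := card_pos_of_zero_mem h0
    have hz0T : (⟨0, hk0⟩ : Fin C.card) ∉ T := by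
      rw [hmemT, cc_zero h0 hk0]
      intro hcc
      rcases Finset.mem_Icc.mp hcc with ⟨h1, _⟩
      exact absurd (le_antisymm (Fin.zero_le a) h1).symm (ne_of_gt ha)
    have hTIcc := convex_eq_Icc T hTne hTconv
    apply hs (T.min' hTne) (T.max' hTne) (T.min'_le _ (T.max'_mem hTne))
    · intro hcc
      apply hz0T
      rw [← hTIcc] at hcc
      rw [hcc]
      exact Finset.mem_univ _
    · rw [← hTIcc]
      exact hTstab
  ext x
  rw [mem_CoreC]
  constructor
  · intro hxU
    by_contra hc
    exact hxU (incl1 x hc)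
  · intro hxC
    exact fun hU => incl2 x hU hxC



/-! ### counting the fiber over a fixed core set -/

lemma fiber_some_card_not_mem (h0 : (0 : Fin n) ∈ C) {c : Fin n} (hc : c ∉ C) :
    Fintype.card {x : Fin n // fC C x = some c} = 0 := by
  rw [Fintype.card_eq_zero_iff]
  refine ⟨fun x => ?_⟩
  rcases fC_eq_some_iff.mp x.2 with ⟨_, hg⟩
  exact hc (hg ▸ gC_mem h0 x.1)

lemma fC_some_iff_val (h0 : (0 : Fin n) ∈ C) {c : Fin n} (hc : c ∈ C) (x : Fin n) :
    fC C x = some c ↔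
      c.val < x.val ∧ x.val < nxt n (C.image Fin.val) c.val := by
  constructor
  · intro h
    rcases fC_eq_some_iff.mp h with ⟨hxC, hg⟩
    have hcx : c < x := lt_of_le_of_ne (hg ▸ gC_le h0 x) (fun h' => hxC (h' ▸ hc))
    refine ⟨hcx, ?_⟩
    by_contra hcon
    push_neg at hcon
    rcases nxt_cases n (C.image Fin.val) c.val with hcase | ⟨hmem, hlt⟩
    · have := x.isLt
      omega
    · rcases Finset.mem_image.mp hmem with ⟨c', hc', hval⟩
      have hc'x : c' ≤ x := by
        rw [Fin.le_def]
        omega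
      have := gC_ge h0 hc' hc'x
      rw [hg] at this
      rw [Fin.le_def] at this
      omega
  · rintro ⟨h1, h2⟩
    have hxC : x ∉ C := by
      intro hxC
      have hmemim : x.val ∈ C.image Fin.val := Finset.mem_image_of_mem _ hxC
      have := nxt_le_of_mem (n := n) hmemim h1
      omega
    apply fC_eq_some_iff.mpr
    refine ⟨hxC, ?_⟩
    apply le_antisymm
    · by_contra hcon
      push_neg at hcon
      have hmem : (gC C x).val ∈ C.image Fin.val := Finset.mem_image_of_mem _ (gC_mem h0 x)
      have hlt : c.val < (gC C x).val := by
        rw [Fin.lt_def] at hcon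
        exact hcon
      have := nxt_le_of_mem (n := n) hmem hlt
      have hle := gC_le h0 x
      rw [Fin.le_def] at hle
      omega
    · exact gC_ge h0 hc (le_of_lt h1)

lemma fiber_some_card_mem (h0 : (0 : Fin n) ∈ C) {c : Fin n} (hc : c ∈ C) :
    Fintype.card {x : Fin n // fC C x = some c}
      = nxt n (C.image Fin.val) c.val - c.val - 1 := by
  classical
  rw [Fintype.card_subtype, ← Nat.card_Ioo c.val (nxt n (C.image Fin.val) c.val)]
  refine Finset.card_bij' (fun x _ => x.val)
    (fun m hm => (⟨m, ?_⟩ : Fin n)) ?hi ?hj ?li ?ri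
  · rcases Finset.mem_Ioo.mp hm with ⟨_, h2⟩
    exact lt_of_lt_of_le h2 (nxt_le _ _ _)
  case hi =>
    intro x hx
    rw [Finset.mem_filter] at hx
    rcases (fC_some_iff_val h0 hc x).mp hx.2 with ⟨h1, h2⟩
    exact Finset.mem_Ioo.mpr ⟨h1, h2⟩
  case hj =>
    intro m hm
    rcases Finset.mem_Ioo.mp hm with ⟨h1, h2⟩
    rw [Finset.mem_filter]
    refine ⟨Finset.mem_univ _, (fC_some_iff_val h0 hc _).mpr ⟨h1, h2⟩⟩
  case li => intro x hx; rfl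
  case ri => intro m hm; rfl

lemma fiber_card (h0 : (0 : Fin n) ∈ C) :
    (univ.filter (fun π : Equiv.Perm (Fin n) => CoreC π = C)).card
      = sifCount C.card *
          ∏ c ∈ C, (nxt n (C.image Fin.val) c.val - c.val - 1).factorial := by
  classical
  have e0 : {π : Equiv.Perm (Fin n) // CoreC π = C}
      ≃ {π : Equiv.Perm (Fin n) // (∀ x, fC C (π x) = fC C x) ∧ SIF (patt (C := C) π)} := by
    apply Equiv.subtypeEquivRight
    intro π
    constructor
    · rintro rfl
      exact ⟨fC_pres π, patt_SIF π⟩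
    · rintro ⟨hf, hs⟩
      exact coreC_eq h0 hf hs
  have e1 : {π : Equiv.Perm (Fin n) // (∀ x, fC C (π x) = fC C x) ∧ SIF (patt (C := C) π)}
      ≃ {pp : {π : Equiv.Perm (Fin n) // ∀ x, fC C (π x) = fC C x} //
          SIF (patt (C := C) pp.val)} :=
    (Equiv.subtypeSubtypeEquivSubtypeInter _ _).symm
  have hpatt : ∀ pp : {π : Equiv.Perm (Fin n) // ∀ x, fC C (π x) = fC C x},
      patt (C := C) pp.val
        = Equiv.permCongr (coreEquivFiber (C := C)).symm ((permFiberEquiv (fC C)) pp none) := by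
    intro pp
    rw [patt, dif_pos pp.2]
    rfl
  have e2 : {pp : {π : Equiv.Perm (Fin n) // ∀ x, fC C (π x) = fC C x} //
        SIF (patt (C := C) pp.val)}
      ≃ {t : (b : Option (Fin n)) → Equiv.Perm {x : Fin n // fC C x = b} //
          SIF (Equiv.permCongr (coreEquivFiber (C := C)).symm (t none))} :=
    Equiv.subtypeEquiv (permFiberEquiv (fC C)) (fun pp => by rw [hpatt pp])
  have e3 : {t : (b : Option (Fin n)) → Equiv.Perm {x : Fin n // fC C x = b} //
        SIF (Equiv.permCongr (coreEquivFiber (C := C)).symm (t none))}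
      ≃ {pr : Equiv.Perm {x : Fin n // fC C x = none} ×
            ((c : Fin n) → Equiv.Perm {x : Fin n // fC C x = some c}) //
          SIF (Equiv.permCongr (coreEquivFiber (C := C)).symm pr.1)} :=
    Equiv.subtypeEquiv (Equiv.piOptionEquivProd) (fun t => Iff.rfl)
  have e4 : {pr : Equiv.Perm {x : Fin n // fC C x = none} ×
            ((c : Fin n) → Equiv.Perm {x : Fin n // fC C x = some c}) //
          SIF (Equiv.permCongr (coreEquivFiber (C := C)).symm pr.1)}
      ≃ {σ : Equiv.Perm {x : Fin n // fC C x = none} //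
            SIF (Equiv.permCongr (coreEquivFiber (C := C)).symm σ)} ×
          ((c : Fin n) → Equiv.Perm {x : Fin n // fC C x = some c}) :=
    Equiv.prodSubtypeFstEquivSubtypeProd
      (p := fun σ : Equiv.Perm {x : Fin n // fC C x = none} =>
        SIF (Equiv.permCongr (coreEquivFiber (C := C)).symm σ))
  have e5 : {σ : Equiv.Perm {x : Fin n // fC C x = none} //
        SIF (Equiv.permCongr (coreEquivFiber (C := C)).symm σ)}
      ≃ {τ : Equiv.Perm (Fin C.card) // SIF τ} :=
    Equiv.subtypeEquiv (Equiv.permCongr (coreEquivFiber (C := C)).symm) (fun σ => Iff.rfl)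
  calc (univ.filter (fun π : Equiv.Perm (Fin n) => CoreC π = C)).card
      = Fintype.card {π : Equiv.Perm (Fin n) // CoreC π = C} := (Fintype.card_subtype _).symm
    _ = Nat.card {π : Equiv.Perm (Fin n) // CoreC π = C} := (Nat.card_eq_fintype_card).symm
    _ = Nat.card ({σ : Equiv.Perm {x : Fin n // fC C x = none} //
            SIF (Equiv.permCongr (coreEquivFiber (C := C)).symm σ)} ×
          ((c : Fin n) → Equiv.Perm {x : Fin n // fC C x = some c})) :=
        Nat.card_congr (e0.trans (e1.trans (e2.trans (e3.trans e4))))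
    _ = Nat.card {σ : Equiv.Perm {x : Fin n // fC C x = none} //
            SIF (Equiv.permCongr (coreEquivFiber (C := C)).symm σ)} *
          Nat.card ((c : Fin n) → Equiv.Perm {x : Fin n // fC C x = some c}) :=
        Nat.card_prod _ _
    _ = sifCount C.card *
          Nat.card ((c : Fin n) → Equiv.Perm {x : Fin n // fC C x = some c}) := by
        rw [Nat.card_congr e5]
        rfl
    _ = sifCount C.card *
          ∏ c ∈ C, (nxt n (C.image Fin.val) c.val - c.val - 1).factorial := by
        congr 1
        rw [Nat.card_pi]
        have hterm : ∀ c : Fin n,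
            Nat.card (Equiv.Perm {x : Fin n // fC C x = some c})
              = (Fintype.card {x : Fin n // fC C x = some c}).factorial := by
          intro c
          rw [Nat.card_eq_fintype_card, Fintype.card_perm]
        calc (∏ c : Fin n, Nat.card (Equiv.Perm {x : Fin n // fC C x = some c}))
            = ∏ c : Fin n, (Fintype.card {x : Fin n // fC C x = some c}).factorial :=
              Finset.prod_congr rfl (fun c _ => hterm c)
          _ = ∏ c ∈ C, (Fintype.card {x : Fin n // fC C x = some c}).factorial := by
              apply (Finset.prod_subset (Finset.subset_univ C) _).symm
              intro c _ hc
              rw [fiber_some_card_not_mem h0 hc]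
              rfl
          _ = ∏ c ∈ C, (nxt n (C.image Fin.val) c.val - c.val - 1).factorial :=
              Finset.prod_congr rfl (fun c hc => by rw [fiber_some_card_mem h0 hc])

lemma count_partition :
    Fintype.card (Equiv.Perm (Fin n))
      = ∑ C ∈ ((univ : Finset (Fin n)).powerset.filter (fun C => (0 : Fin n) ∈ C)),
          sifCount C.card *
            ∏ c ∈ C, (nxt n (C.image Fin.val) c.val - c.val - 1).factorial := by
  classical
  rw [← Finset.card_univ]
  rw [Finset.card_eq_sum_card_fiberwise (f := CoreC)
    (t := (univ : Finset (Fin n)).powerset)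
    (fun π _ => Finset.mem_powerset.mpr (Finset.subset_univ _))]
  rw [← Finset.sum_subset (Finset.filter_subset (fun C => (0 : Fin n) ∈ C) _) ?_]
  · apply Finset.sum_congr rfl
    intro C hC
    rw [Finset.mem_filter] at hC
    exact fiber_card hC.2
  · intro C _ hC
    rw [Finset.mem_filter, not_and] at hC
    rw [Finset.card_eq_zero]
    apply Finset.filter_eq_empty_iff.mpr
    intro π _ hcon
    exact (hC (Finset.mem_powerset.mpr (Finset.subset_univ _))) (hcon ▸ zero_mem_CoreC π)

lemma key_pos : ((n.factorial : ℚ)) = ∑ k ∈ range (n+1), (sifCount k : ℚ) * L n k := by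
  classical
  have h1 := count_partition (n := n)
  rw [Fintype.card_perm, Fintype.card_fin] at h1
  have h1Q : (n.factorial : ℚ)
      = ∑ C ∈ ((univ : Finset (Fin n)).powerset.filter (fun C => (0 : Fin n) ∈ C)),
          (sifCount C.card : ℚ) *
            ((∏ c ∈ C, (nxt n (C.image Fin.val) c.val - c.val - 1).factorial : ℕ) : ℚ) := by
    rw [h1]
    push_cast
    rfl
  rw [h1Q]
  have hbridge : ∑ C ∈ ((univ : Finset (Fin n)).powerset.filter (fun C => (0 : Fin n) ∈ C)),
      (sifCount C.card : ℚ) *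
        ((∏ c ∈ C, (nxt n (C.image Fin.val) c.val - c.val - 1).factorial : ℕ) : ℚ)
      = ∑ D ∈ (range n).powerset.filter (fun D => 0 ∈ D),
          (sifCount D.card : ℚ) * (Wt n D : ℚ) := by
    refine Finset.sum_bij' (fun C _ => C.image Fin.val)
      (fun D _ => univ.filter (fun x : Fin n => x.val ∈ D)) ?hi ?hj ?li ?ri ?vals
    case hi =>
      intro C hC
      rw [Finset.mem_filter] at hC ⊢
      constructor
      · rw [Finset.mem_powerset]
        intro m hm
        rcases Finset.mem_image.mp hm with ⟨x, _, rfl⟩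
        exact Finset.mem_range.mpr x.isLt
      · exact Finset.mem_image_of_mem _ hC.2
    case hj =>
      intro D hD
      rw [Finset.mem_filter] at hD ⊢
      refine ⟨Finset.mem_powerset.mpr (Finset.subset_univ _), ?_⟩
      rw [Finset.mem_filter]
      exact ⟨Finset.mem_univ _, hD.2⟩
    case li =>
      intro C hC
      ext x
      rw [Finset.mem_filter]
      simp only [Finset.mem_univ, true_and]
      constructor
      · intro h
        rcases Finset.mem_image.mp h with ⟨y, hy, hxy⟩
        rwa [← Fin.val_injective hxy]
      · intro h
        exact Finset.mem_image_of_mem _ h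
    case ri =>
      intro D hD
      rw [Finset.mem_filter, Finset.mem_powerset] at hD
      ext m
      constructor
      · intro h
        rcases Finset.mem_image.mp h with ⟨x, hx, rfl⟩
        rw [Finset.mem_filter] at hx
        exact hx.2
      · intro h
        have hmn : m < n := Finset.mem_range.mp (hD.1 h)
        apply Finset.mem_image.mpr
        refine ⟨⟨m, hmn⟩, ?_, rfl⟩
        rw [Finset.mem_filter]
        exact ⟨Finset.mem_univ _, h⟩
    case vals =>
      intro C hC
      have hcard : (C.image Fin.val).card = C.card :=
        Finset.card_image_of_injective C Fin.val_injective
      have hprod : ∏ c ∈ C, (nxt n (C.image Fin.val) c.val - c.val - 1).factorial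
          = Wt n (C.image Fin.val) := by
        rw [Wt]
        rw [Finset.prod_image (fun x _ y _ h => Fin.val_injective h)]
      rw [hcard, hprod]
  rw [hbridge]
  have hgroup : ∑ D ∈ (range n).powerset.filter (fun D => 0 ∈ D),
      (sifCount D.card : ℚ) * (Wt n D : ℚ)
      = ∑ k ∈ range (n+1), ∑ D ∈ ((range n).powerset.filter (fun D => 0 ∈ D)).filter
          (fun D => D.card = k), (sifCount D.card : ℚ) * (Wt n D : ℚ) :=
    (Finset.sum_fiberwise_of_maps_to (g := Finset.card) (fun D hD => by
      rw [Finset.mem_filter, Finset.mem_powerset] at hD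
      rw [Finset.mem_range]
      have := Finset.card_le_card hD.1
      rw [Finset.card_range] at this
      omega) _).symm
  rw [hgroup]
  apply Finset.sum_congr rfl
  intro k _
  have hset : ((range n).powerset.filter (fun D => 0 ∈ D)).filter (fun D => D.card = k)
      = SUMCset n k := by
    ext D
    simp only [SUMCset, Finset.mem_filter, Finset.mem_powerset, Finset.filter_filter]
    have hn : 0 < n := NeZero.pos n
    tauto
  rw [hset]
  calc ∑ D ∈ SUMCset n k, (sifCount D.card : ℚ) * (Wt n D : ℚ)
      = ∑ D ∈ SUMCset n k, (sifCount k : ℚ) * (Wt n D : ℚ) := by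
        apply Finset.sum_congr rfl
        intro D hD
        rw [(mem_SUMCset.mp hD).2.1]
    _ = (sifCount k : ℚ) * L n k := by rw [← Finset.mul_sum, sumc]

lemma sifCount_zero : sifCount 0 = 1 := by
  rw [sifCount]
  have hall : ∀ σ : Equiv.Perm (Fin 0), SIF σ := fun σ i _ => i.elim0
  rw [Nat.card_congr (Equiv.subtypeUnivEquiv hall)]
  rw [Nat.card_eq_fintype_card, Fintype.card_perm]
  simp

lemma key_all (n : ℕ) :
    ((n.factorial : ℚ)) = ∑ k ∈ range (n+1), (sifCount k : ℚ) * L n k := by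
  cases n with
  | zero =>
    rw [Finset.range_one, Finset.sum_singleton, sifCount_zero]
    norm_num [L]
  | succ m => exact key_pos (n := m + 1)


end SIFp

/-- `A(X)·F^{<-1>}(X) = X` in `ℚ[[X]]`. -/
theorem A_mul_compInv (G : PowerSeries ℚ) (hG : IsCompInvOfF G) :
    A * G = (PowerSeries.X : PowerSeries ℚ) := by
  apply SIFp.main_reduction _ G hG.1 hG.2
  intro n
  have := SIFp.key_all n
  rw [this]
  apply Finset.sum_congr rfl
  intro k _
  rw [SIFp.coeff_F_pow]
end
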